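/- arXiv:1311.6148 — 11 statements merged into one kernel-verified Lean document; each statement's English description precedes it below -/
import Mathlib

section
/- Let G be an abelian finite p-group and α an automorphism of G whose order is coprime to p. If the commutator subgroup [G,α] is cyclic, then [G,α] = [G,α^i] for every integer i such that α^i ≠ 1. -/
section AuxDefs

variable {G : Type*} [CommGroup G]

/-- The homomorphism `g ↦ g⁻¹ * γ g`. -/
private def comMap (γ : MulAut G) : G →* G where
  toFun g := g⁻¹ * γ g
  map_one' := by simp
  map_mul' a b := by
    simp only [map_mul, mul_inv_rev]
    simp [mul_comm, mul_left_comm, mul_assoc]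

private lemma comMap_apply (γ : MulAut G) (g : G) : comMap γ g = g⁻¹ * γ g := rfl

private lemma closure_eq_comMap_range (γ : MulAut G) :
    Subgroup.closure {x : G | ∃ g : G, x = g⁻¹ * γ g} = (comMap γ).range := by
  rw [← Subgroup.closure_eq (comMap γ).range]
  congr 1
  ext x
  simp only [Set.mem_setOf_eq, SetLike.mem_coe, MonoidHom.mem_range, comMap_apply]
  exact ⟨fun ⟨g, hg⟩ => ⟨g, hg.symm⟩, fun ⟨g, hg⟩ => ⟨g, hg.symm⟩⟩

/-- The norm map `g ↦ ∏_{j<n} γ^j g`. -/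
private def normMap (γ : MulAut G) (n : ℕ) : G →* G where
  toFun g := ∏ j ∈ Finset.range n, (γ ^ j) g
  map_one' := by simp
  map_mul' a b := by
    simp [Finset.prod_mul_distrib]

private lemma normMap_comMap (γ : MulAut G) (g : G) :
    normMap γ (orderOf γ) (comMap γ g) = 1 := by
  have key : ∀ j : ℕ, (γ ^ j) (comMap γ g) = ((γ ^ (j + 1)) g) / ((γ ^ j) g) := by
    intro j
    rw [comMap_apply, map_mul, map_inv, pow_succ, MulAut.mul_apply]
    rw [div_eq_mul_inv, mul_comm]
  show (∏ j ∈ Finset.range (orderOf γ), (γ ^ j) (comMap γ g)) = 1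
  simp only [key]
  rw [Finset.prod_range_div (fun j => (γ ^ j) g)]
  simp [pow_orderOf_eq_one]

private lemma normMap_fixed (γ : MulAut G) (n : ℕ) {x : G} (hx : γ x = x) :
    normMap γ n x = x ^ n := by
  have key : ∀ j : ℕ, (γ ^ j) x = x := by
    intro j
    induction j with
    | zero => rfl
    | succ j ih => rw [pow_succ, MulAut.mul_apply, hx, ih]
  show (∏ j ∈ Finset.range n, (γ ^ j) x) = x ^ n
  simp [key]

/-- Fixed points of `γ` inside `[G,γ]` are trivial (coprime action). -/
private lemma fixed_comMap_eq_one {p : ℕ} (hG : IsPGroup p G) (γ : MulAut G)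
    (hcop : (orderOf γ).Coprime p) {x : G} (hx : x ∈ (comMap γ).range)
    (hfix : γ x = x) : x = 1 := by
  obtain ⟨g, hg⟩ := hx
  have h1 : normMap γ (orderOf γ) x = 1 := by rw [← hg]; exact normMap_comMap γ g
  have h2 : x ^ orderOf γ = 1 := by rw [← normMap_fixed γ (orderOf γ) hfix, h1]
  obtain ⟨k, hk⟩ := hG x
  have hd1 : orderOf x ∣ orderOf γ := orderOf_dvd_of_pow_eq_one h2
  have hd2 : orderOf x ∣ p ^ k := orderOf_dvd_of_pow_eq_one hk
  have : orderOf x = 1 := Nat.eq_one_of_dvd_coprimes (hcop.pow_right k) hd1 hd2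
  exact orderOf_eq_one_iff.mp this

private lemma comMap_pow_range_le (α : MulAut G) (n : ℕ) :
    (comMap (α ^ n)).range ≤ (comMap α).range := by
  induction n with
  | zero =>
    rintro x ⟨g, rfl⟩
    have : comMap (α ^ 0) g = 1 := by
      rw [comMap_apply, pow_zero, MulAut.one_apply, inv_mul_cancel]
    rw [this]
    exact one_mem _
  | succ n ih =>
    rintro x ⟨g, rfl⟩
    have key : comMap (α ^ (n + 1)) g = comMap (α ^ n) g * comMap α ((α ^ n) g) := by
      rw [comMap_apply, comMap_apply, comMap_apply, pow_succ', MulAut.mul_apply]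
      rw [mul_assoc, ← mul_assoc ((α ^ n) g), mul_inv_cancel, one_mul]
    rw [key]
    exact mul_mem (ih ⟨g, rfl⟩) ⟨(α ^ n) g, rfl⟩

private lemma comMap_zpow_range_le (α : MulAut G) (i : ℤ) :
    (comMap (α ^ i)).range ≤ (comMap α).range := by
  obtain ⟨n, rfl | rfl⟩ := i.eq_nat_or_neg
  · rw [zpow_natCast]; exact comMap_pow_range_le α n
  · rintro x ⟨g, rfl⟩
    have hcancel : (α ^ (n : ℕ)) ((α ^ (-(n : ℤ))) g) = g := by
      have : (α ^ (n : ℕ)) * (α ^ (-(n : ℤ))) = 1 := by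
        rw [← zpow_natCast α n, ← zpow_add]
        simp
      rw [← MulAut.mul_apply, this, MulAut.one_apply]
    have key : comMap (α ^ (-(n : ℤ))) g = (comMap (α ^ (n : ℕ)) ((α ^ (-(n : ℤ))) g))⁻¹ := by
      rw [comMap_apply, comMap_apply, hcancel, mul_inv_rev, inv_inv]
    rw [key]
    exact inv_mem (comMap_pow_range_le α n ⟨(α ^ (-(n : ℤ))) g, rfl⟩)

private lemma exists_mem_orderOf_eq_prime {p : ℕ} (hp : p.Prime) {H : Type*} [Group H] [Finite H]
    (hpg : IsPGroup p H) {A : Subgroup H} (hA : A ≠ ⊥) : ∃ x ∈ A, orderOf x = p := by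
  obtain ⟨⟨a, haA⟩, ha⟩ := Subgroup.ne_bot_iff_exists_ne_one.mp hA
  have ha1 : a ≠ 1 := by simpa [Subtype.ext_iff] using ha
  obtain ⟨k, hk⟩ := hpg a
  have hdvd : orderOf a ∣ p ^ k := orderOf_dvd_of_pow_eq_one hk
  obtain ⟨m, _, hma⟩ := (Nat.dvd_prime_pow hp).mp hdvd
  have h0 : orderOf a ≠ 0 := (orderOf_pos a).ne'
  have hpd : p ∣ orderOf a := by
    cases m with
    | zero =>
      exfalso
      rw [pow_zero] at hma
      exact ha1 (orderOf_eq_one_iff.mp hma)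
    | succ m => rw [hma]; exact dvd_pow_self p (Nat.succ_ne_zero m)
  exact ⟨a ^ (orderOf a / p), A.pow_mem haA _, orderOf_pow_orderOf_div h0 hpd⟩

private lemma mem_zpowers_of_orderOf_eq_prime {p : ℕ} (hp : p.Prime) {H : Type*} [CommGroup H]
    [Finite H] [IsCyclic H] {x y : H} (hx : orderOf x = p) (hy : y ^ p = 1) :
    y ∈ Subgroup.zpowers x := by
  classical
  have : Fintype H := Fintype.ofFinite H
  have hsub : (Subgroup.zpowers x : Set H).toFinset ⊆
      Finset.univ.filter (fun a : H => a ^ p = 1) := by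
    intro a hain
    rw [Set.mem_toFinset] at hain
    obtain ⟨k, hk⟩ := hain
    rw [Finset.mem_filter]
    refine ⟨Finset.mem_univ a, ?_⟩
    rw [← hk, ← zpow_natCast (x ^ k), ← zpow_mul, mul_comm, zpow_mul, zpow_natCast,
      ← hx, pow_orderOf_eq_one, one_zpow]
  have hcard : (Finset.univ.filter (fun a : H => a ^ p = 1)).card ≤
      (Subgroup.zpowers x : Set H).toFinset.card := by
    have h1 : (Finset.univ.filter (fun a : H => a ^ p = 1)).card ≤ p :=
      IsCyclic.card_pow_eq_one_le hp.pos
    have h2 : (Subgroup.zpowers x : Set H).toFinset.card = p := by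
      rw [Set.toFinset_card]
      simp only [SetLike.coe_sort_coe]
      rw [Fintype.card_zpowers, hx]
    omega
  have heq := Finset.eq_of_subset_of_card_le hsub hcard
  have : y ∈ (Subgroup.zpowers x : Set H).toFinset := by
    rw [heq, Finset.mem_filter]
    exact ⟨Finset.mem_univ y, hy⟩
  rwa [Set.mem_toFinset] at this

/-- In a cyclic `p`-group, two subgroups with trivial intersection cannot both be
nontrivial. -/
private lemma chain_lemma {p : ℕ} (hp : p.Prime) {H : Type*} [CommGroup H] [Finite H]
    [IsCyclic H] (hpg : IsPGroup p H) {A B : Subgroup H} (hAB : A ⊓ B = ⊥) :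
    A = ⊥ ∨ B = ⊥ := by
  by_contra hc
  push_neg at hc
  obtain ⟨hA, hB⟩ := hc
  obtain ⟨x, hxA, hx⟩ := exists_mem_orderOf_eq_prime hp hpg hA
  obtain ⟨y, hyB, hy⟩ := exists_mem_orderOf_eq_prime hp hpg hB
  have hyp : y ^ p = 1 := by rw [← hy]; exact pow_orderOf_eq_one y
  have hyx : y ∈ Subgroup.zpowers x := mem_zpowers_of_orderOf_eq_prime hp hx hyp
  have hyA : y ∈ A := (Subgroup.zpowers_le.mpr hxA) hyx
  have : y ∈ A ⊓ B := ⟨hyA, hyB⟩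
  rw [hAB, Subgroup.mem_bot] at this
  rw [this, orderOf_one] at hy
  exact hp.one_lt.ne' hy.symm

end AuxDefs

theorem stmt_0 (p : ℕ) [Fact p.Prime] (G : Type*) [CommGroup G] [Finite G]
    (hG : IsPGroup p G) (α : MulAut G) (hcop : (orderOf α).Coprime p)
    (hcyc : IsCyclic (Subgroup.closure {x : G | ∃ g : G, x = g⁻¹ * α g})) :
    ∀ i : ℤ, α ^ i ≠ 1 →
      Subgroup.closure {x : G | ∃ g : G, x = g⁻¹ * α g} =
        Subgroup.closure {x : G | ∃ g : G, x = g⁻¹ * (α ^ i) g} := by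
  intro i hi
  rw [closure_eq_comMap_range] at hcyc ⊢
  rw [closure_eq_comMap_range]
  set β : MulAut G := α ^ i with hβ
  set H : Subgroup G := (comMap α).range with hH
  have hle : (comMap β).range ≤ H := comMap_zpow_range_le α i
  refine le_antisymm ?_ hle
  -- the order of β is coprime to p
  have hdvd : orderOf β ∣ orderOf α := by
    apply orderOf_dvd_of_pow_eq_one
    rw [hβ, ← zpow_natCast (α ^ i), ← zpow_mul, mul_comm, zpow_mul, zpow_natCast,
      pow_orderOf_eq_one, one_zpow]
  have hcopβ : (orderOf β).Coprime p := Nat.Coprime.coprime_dvd_left hdvd hcop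
  -- β commutes with α
  have hcomm : ∀ g : G, β (α g) = α (β g) := by
    intro g
    have h : α * β = β * α := ((Commute.refl α).zpow_right i)
    calc β (α g) = (β * α) g := rfl
      _ = (α * β) g := by rw [h]
      _ = α (β g) := rfl
  -- H is stable under β
  have hstab : ∀ x ∈ H, β x ∈ H := by
    rintro x ⟨g, rfl⟩
    refine ⟨β g, ?_⟩
    rw [comMap_apply, comMap_apply, map_mul, map_inv, hcomm g]
  -- the restriction of `comMap β` to H, as a map H →* H
  have hmem : ∀ x : H, comMap β (x : G) ∈ H := by
    intro x
    rw [comMap_apply]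
    exact mul_mem (inv_mem x.2) (hstab _ x.2)
  let φ : ↥H →* ↥H := ((comMap β).comp H.subtype).codRestrict H hmem
  have hφ : ∀ x : H, (φ x : G) = comMap β (x : G) := fun x => rfl
  -- kernel and range of φ intersect trivially
  have hker : φ.ker ⊓ φ.range = ⊥ := by
    rw [eq_bot_iff]
    rintro z ⟨hz1, hz2⟩
    have h1 : comMap β (z : G) = 1 := by
      have := congrArg (Subtype.val) (MonoidHom.mem_ker.mp hz1)
      rw [hφ] at this
      exact this
    rw [comMap_apply] at h1
    have hzfix : β (z : G) = (z : G) := (inv_mul_eq_one.mp h1).symm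
    obtain ⟨w, hw⟩ := hz2
    have hzr : (z : G) ∈ (comMap β).range := ⟨(w : G), by rw [← hφ, hw]⟩
    have := fixed_comMap_eq_one hG β hcopβ hzr hzfix
    exact Subgroup.mem_bot.mpr (Subtype.ext this)
  haveI : IsCyclic ↥H := hcyc
  have hpgH : IsPGroup p ↥H := hG.to_subgroup H
  rcases chain_lemma (Fact.out) hpgH hker with hK | hI
  · -- φ is injective, hence surjective, so H ≤ range (comMap β)
    have hinj : Function.Injective φ := (MonoidHom.ker_eq_bot_iff φ).mp hK
    have hsurj : Function.Surjective φ := Finite.surjective_of_injective hinj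
    intro x hx
    obtain ⟨w, hw⟩ := hsurj ⟨x, hx⟩
    exact ⟨(w : G), by rw [← hφ, hw]⟩
  · -- φ is trivial: then β fixes H pointwise, hence β = 1, contradiction
    exfalso
    apply hi
    have htriv : ∀ w : ↥H, φ w = 1 := by
      intro w
      have : φ w ∈ φ.range := ⟨w, rfl⟩
      rw [hI, Subgroup.mem_bot] at this
      exact this
    have hfixall : ∀ g : G, β g = g := by
      intro g
      have hm : comMap β g ∈ H := hle ⟨g, rfl⟩
      have hfix : β (comMap β g) = comMap β g := by
        have h1 := congrArg Subtype.val (htriv ⟨comMap β g, hm⟩)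
        rw [hφ] at h1
        rw [comMap_apply] at h1
        exact (inv_mul_eq_one.mp h1).symm
      have := fixed_comMap_eq_one hG β hcopβ ⟨g, rfl⟩ hfix
      rw [comMap_apply] at this
      exact (inv_mul_eq_one.mp this).symm
    exact DFunLike.ext _ _ hfixall
end

section
/- Let A and G be finite groups with gcd(|G|,|A|) = 1 and suppose A acts on G by automorphisms. If G is an abelian p-group and A acts trivially on Ω₁(G), the subgroup generated by elements of order p, then A acts trivially on G. -/
theorem stmt_3 (p : ℕ) [Fact p.Prime] (A G : Type*) [Group A] [Finite A]
    [CommGroup G] [Finite G] [MulDistribMulAction A G]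
    (hG : IsPGroup p G) (hcop : (Nat.card G).Coprime (Nat.card A))
    (homega : ∀ (a : A) (g : G), g ^ p = 1 → a • g = g) :
    ∀ (a : A) (g : G), a • g = g := by
  intro a g
  obtain ⟨n, hn⟩ := hG g
  induction n generalizing g with
  | zero =>
    simp only [pow_zero, pow_one] at hn
    simp [hn]
  | succ n ih =>
    have hgp : (g ^ p) ^ p ^ n = 1 := by
      rw [← pow_mul, mul_comm, ← pow_succ]
      exact hn
    have hfix := ih (g ^ p) hgp
    set c := a • g * g⁻¹ with hc
    have hcp : c ^ p = 1 := by
      rw [hc, mul_pow, inv_pow, ← smul_pow', hfix, mul_inv_cancel]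
    have hac : ∀ b : A, b • c = c := fun b => homega b c hcp
    have hag : a • g = c * g := by
      rw [hc, inv_mul_cancel_right]
    have key : ∀ k : ℕ, a ^ k • g = c ^ k * g := by
      intro k; induction k with
      | zero => simp
      | succ k ihk =>
        rw [pow_succ', mul_smul, ihk, smul_mul', smul_pow', hac, hag, ← mul_assoc,
          ← pow_succ]
    have h1 : c ^ Nat.card A = 1 := by
      have hk := key (Nat.card A)
      rw [pow_card_eq_one', one_smul] at hk
      exact (mul_eq_right.mp hk.symm)
    have hd : orderOf c = 1 := by
      refine Nat.eq_one_of_dvd_one ?_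
      have h2 : orderOf c ∣ Nat.card G := orderOf_dvd_natCard c
      have h3 : orderOf c ∣ Nat.card A := orderOf_dvd_of_pow_eq_one h1
      exact hcop ▸ Nat.dvd_gcd h2 h3
    have : c = 1 := orderOf_eq_one_iff.mp hd
    rw [hag, this, one_mul]
end

section
/- Let G be a finite p-group covered by m cyclic subgroups. If G contains an elementary abelian subgroup of order p², then p + 1 ≤ m. -/
theorem stmt_6 (p : ℕ) [Fact p.Prime] (G : Type*) [Group G] [Finite G]
    (hG : IsPGroup p G) (m : ℕ) (C : Fin m → Subgroup G)
    (hcyc : ∀ i, IsCyclic (C i)) (hcov : ∀ g : G, ∃ i, g ∈ C i)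
    (J : Subgroup G) (hJcard : Nat.card J = p ^ 2) (hJel : ∀ g ∈ J, g ^ p = 1) :
    p + 1 ≤ m := by
  classical
  have hp : p.Prime := Fact.out
  haveI : Fintype G := Fintype.ofFinite G
  -- the finset of nonidentity elements of J
  set T : Finset G := Finset.univ.filter (fun g => g ∈ J ∧ g ≠ 1) with hT
  have hTcard : T.card = p ^ 2 - 1 := by
    have h1 : (Finset.univ.filter (fun g : G => g ∈ J)).card = p ^ 2 := by
      rw [← hJcard, Nat.card_eq_fintype_card, ← Fintype.card_coe]
      apply Fintype.card_congr
      exact Equiv.subtypeEquiv (Equiv.refl G) (by simp)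
    have : T = (Finset.univ.filter (fun g : G => g ∈ J)).erase 1 := by
      ext g; simp [hT, and_comm]
    rw [this, Finset.card_erase_of_mem (by simp [J.one_mem]), h1]
  -- each C i contains at most p - 1 elements of T
  have hfib : ∀ i, (T.filter (fun g => g ∈ C i)).card ≤ p - 1 := by
    intro i
    haveI := hcyc i
    have hmap : ∀ g ∈ T.filter (fun g => g ∈ C i), True := fun _ _ => trivial
    -- inject into {x : C i | x ^ p = 1 ∧ x ≠ 1}
    have hinj : (T.filter (fun g => g ∈ C i)).card ≤
        (Finset.univ.filter (fun x : C i => x ^ p = 1 ∧ x ≠ 1)).card := by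
      apply Finset.card_le_card_of_injOn
        (fun g => if h : g ∈ C i then (⟨g, h⟩ : C i) else 1)
      · intro g hg
        simp only [hT, Finset.mem_coe, Finset.mem_filter, Finset.mem_univ, true_and] at hg ⊢
        obtain ⟨⟨hgJ, hg1⟩, hgC⟩ := hg
        rw [dif_pos hgC]
        constructor
        · ext; simpa using hJel g hgJ
        · exact fun h => hg1 (congrArg Subtype.val h)
      · intro a ha b hb hab
        simp only [Finset.coe_filter, Set.mem_setOf_eq] at ha hb
        simp only [] at hab; rw [dif_pos ha.2, dif_pos hb.2] at hab
        exact congrArg Subtype.val hab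
    have hle : (Finset.univ.filter (fun x : C i => x ^ p = 1 ∧ x ≠ 1)).card ≤ p - 1 := by
      have h1 : (Finset.univ.filter (fun x : C i => x ^ p = 1 ∧ x ≠ 1)) =
          (Finset.univ.filter (fun x : C i => x ^ p = 1)).erase 1 := by
        ext x; simp [and_comm]
      rw [h1]
      have h2 : (Finset.univ.filter (fun x : C i => x ^ p = 1)).card ≤ p := by
        simpa using IsCyclic.card_pow_eq_one_le (α := C i) hp.pos
      have h3 : (1 : C i) ∈ Finset.univ.filter (fun x : C i => x ^ p = 1) := by simp
      rw [Finset.card_erase_of_mem h3]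
      omega
    exact hinj.trans hle
  -- T is covered by the fibers
  have hcover : T ⊆ Finset.univ.biUnion (fun i : Fin m => T.filter (fun g => g ∈ C i)) := by
    intro g hg
    obtain ⟨i, hi⟩ := hcov g
    exact Finset.mem_biUnion.2 ⟨i, Finset.mem_univ i, Finset.mem_filter.2 ⟨hg, hi⟩⟩
  have hbound : p ^ 2 - 1 ≤ m * (p - 1) := by
    calc p ^ 2 - 1 = T.card := hTcard.symm
      _ ≤ (Finset.univ.biUnion (fun i : Fin m => T.filter (fun g => g ∈ C i))).card :=
          Finset.card_le_card hcover
      _ ≤ ∑ i : Fin m, (T.filter (fun g => g ∈ C i)).card := Finset.card_biUnion_le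
      _ ≤ ∑ _i : Fin m, (p - 1) := Finset.sum_le_sum (fun i _ => hfib i)
      _ = m * (p - 1) := by simp [Finset.sum_const, Finset.card_univ]
  have hp2 : 2 ≤ p := hp.two_le
  have key : (p + 1) * (p - 1) ≤ m * (p - 1) := by
    have h4 : p ^ 2 - 1 = (p + 1) * (p - 1) := by
      have := Nat.sq_sub_sq p 1
      simpa using this
    omega
  exact Nat.le_of_mul_le_mul_right key (by omega)
end

section
/- Let A be a noncyclic finite group of automorphisms of a noncyclic finite abelian p-group G, with gcd(|A|, p) = 1. Then there exists a ∈ A such that [G,a] is not cyclic. -/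
set_option linter.unusedSectionVars false

open Subgroup

section
variable {p : ℕ} [hp : Fact p.Prime] {G : Type*} [CommGroup G] [Finite G]

private def phih (a : MulAut G) : G →* G :=
  MonoidHom.mk' (fun g => g⁻¹ * a g) (by
    intro x y
    simp only [map_mul, mul_inv]
    exact mul_mul_mul_comm _ _ _ _)

private lemma phih_apply (a : MulAut G) (g : G) : phih a g = g⁻¹ * a g := rfl

private def Sp (p : ℕ) (G : Type*) [CommGroup G] : Subgroup G := (powMonoidHom p).range

private lemma sp_le_comap (f : G →* G) : Sp p G ≤ (Sp p G).comap f := by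
  rintro x ⟨y, rfl⟩
  exact ⟨f y, by simp [powMonoidHom_apply, map_pow]⟩

private def fm (a : MulAut G) : G ⧸ Sp p G →* G ⧸ Sp p G :=
  QuotientGroup.map _ _ a.toMonoidHom (sp_le_comap _)

private def psim (a : MulAut G) : G ⧸ Sp p G →* G ⧸ Sp p G :=
  QuotientGroup.map _ _ (phih a) (sp_le_comap _)

private lemma fm_mk (a : MulAut G) (g : G) :
    fm a ((g : G) : G ⧸ Sp p G) = ((a g : G) : G ⧸ Sp p G) := rfl

private lemma psim_mk (a : MulAut G) (g : G) :
    psim a ((g : G) : G ⧸ Sp p G) = ((phih a g : G) : G ⧸ Sp p G) := rfl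

private lemma fm_one : fm (1 : MulAut G) = MonoidHom.id (G ⧸ Sp p G) := by
  refine MonoidHom.ext fun x => ?_
  refine QuotientGroup.induction_on x fun g => ?_
  rfl

private lemma fm_mul (a b : MulAut G) :
    fm (a * b) = (fm a).comp (fm b : G ⧸ Sp p G →* G ⧸ Sp p G) := by
  refine MonoidHom.ext fun x => ?_
  refine QuotientGroup.induction_on x fun g => ?_
  rfl

private lemma psim_eq (a : MulAut G) (x : G ⧸ Sp p G) : psim a x = x⁻¹ * fm a x := by
  refine QuotientGroup.induction_on x fun g => ?_
  rw [psim_mk, fm_mk, phih_apply]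
  rfl

private lemma qt_pow (x : G ⧸ Sp p G) : x ^ p = 1 := by
  refine QuotientGroup.induction_on x fun g => ?_
  have : ((g : G) : G ⧸ Sp p G) ^ p = ((g ^ p : G) : G ⧸ Sp p G) := rfl
  rw [this, QuotientGroup.eq_one_iff]
  exact ⟨g, rfl⟩

private lemma fm_inv_fm (a : MulAut G) (x : G ⧸ Sp p G) : fm a⁻¹ (fm a x) = x := by
  refine QuotientGroup.induction_on x fun g => ?_
  rw [fm_mk, fm_mk]
  simp

private lemma fm_fm_inv (a : MulAut G) (x : G ⧸ Sp p G) : fm a (fm a⁻¹ x) = x := by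
  refine QuotientGroup.induction_on x fun g => ?_
  rw [fm_mk, fm_mk]
  simp

private lemma key1 (a : MulAut G) (k : ℕ) (g : G) :
    g⁻¹ * (a ^ k) g = phih a (∏ j ∈ Finset.range k, (a ^ j) g) := by
  induction k with
  | zero => simp [phih_apply]
  | succ n ih =>
      have h1 : (a ^ (n + 1)) g = a ((a ^ n) g) := by
        rw [pow_succ', MulAut.mul_apply]
      rw [Finset.prod_range_succ, map_mul, ← ih, h1, phih_apply]
      group


private lemma aux_faithful (hG : IsPGroup p G) (A : Subgroup (MulAut G))
    (hcop : (Nat.card A).Coprime p) {a : MulAut G} (ha : a ∈ A)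
    (h : ∀ g : G, ∃ x : G, phih a g = x ^ p) : a = 1 := by
  have hfinA : Finite (MulAut G) :=
    Finite.of_injective (fun e => (e : G → G)) DFunLike.coe_injective
  set m := Nat.card A with hm
  have ham : a ^ m = 1 := by
    have h1 : (⟨a, ha⟩ : A) ^ m = 1 := pow_card_eq_one'
    have h2 := congrArg (Subgroup.subtype A) h1
    simpa using h2
  have main : ∀ g : G, ∃ w : G, phih a g ^ m = (phih a (phih a w))⁻¹ := by
    intro g
    refine ⟨∏ j ∈ Finset.range m, ∏ i ∈ Finset.range j, (a ^ i) g, ?_⟩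
    have h2 : phih a (∏ j ∈ Finset.range m, (a ^ j) g) = 1 := by
      rw [← key1, ham]; simp
    have h3 : (∏ j ∈ Finset.range m, (a ^ j) g)
        = g ^ m * phih a (∏ j ∈ Finset.range m, ∏ i ∈ Finset.range j, (a ^ i) g) := by
      have h4 : ∀ j, (a ^ j) g = g * phih a (∏ i ∈ Finset.range j, (a ^ i) g) := by
        intro j; rw [← key1]; group
      rw [map_prod]
      calc (∏ j ∈ Finset.range m, (a ^ j) g)
          = ∏ j ∈ Finset.range m, (g * phih a (∏ i ∈ Finset.range j, (a ^ i) g)) := by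
            exact Finset.prod_congr rfl fun j _ => h4 j
        _ = (∏ _j ∈ Finset.range m, g) *
              ∏ j ∈ Finset.range m, phih a (∏ i ∈ Finset.range j, (a ^ i) g) :=
            Finset.prod_mul_distrib
        _ = g ^ m * ∏ j ∈ Finset.range m, phih a (∏ i ∈ Finset.range j, (a ^ i) g) := by
            rw [Finset.prod_const, Finset.card_range]
    rw [h3, map_mul, map_pow] at h2
    exact eq_inv_of_mul_eq_one_left h2
  set W := (phih a).range with hW
  have hWp : IsPGroup p (W : Subgroup G) := hG.to_subgroup _
  have hcards : (Nat.card W).Coprime m := by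
    obtain ⟨n, hn⟩ := (IsPGroup.iff_card).mp hWp
    rw [hn]
    exact Nat.Coprime.pow_left n hcop.symm
  have hsurj : ∀ w ∈ W, ∃ v ∈ W, v ^ m = w := by
    intro w hw
    obtain ⟨v, hv⟩ := (powCoprime hcards).surjective ⟨w, hw⟩
    refine ⟨(v : G), v.2, ?_⟩
    have := congrArg Subtype.val hv
    simpa [powCoprime] using this
  have hstep : ∀ w ∈ W, ∃ w' ∈ W, w ^ m = w' ^ p := by
    intro w hw
    obtain ⟨g, rfl⟩ := hw
    obtain ⟨V, hV⟩ := main g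
    obtain ⟨x, hx⟩ := h V
    refine ⟨(phih a x)⁻¹, inv_mem ⟨x, rfl⟩, ?_⟩
    rw [hV, hx, map_pow, inv_pow]
  have hdesc : ∀ w ∈ W, ∃ w' ∈ W, w = w' ^ p := by
    intro w hw
    obtain ⟨v, hv, hvm⟩ := hsurj w hw
    obtain ⟨w', hw', h'⟩ := hstep v hv
    exact ⟨w', hw', by rw [← hvm, h']⟩
  have hiter : ∀ k : ℕ, ∀ w ∈ W, ∃ w' ∈ W, w = w' ^ (p ^ k) := by
    intro k; induction k with
    | zero => intro w hw; exact ⟨w, hw, by simp⟩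
    | succ n ih =>
        intro w hw
        obtain ⟨w1, hw1, e1⟩ := ih w hw
        obtain ⟨w2, hw2, e2⟩ := hdesc w1 hw1
        refine ⟨w2, hw2, ?_⟩
        rw [e1, e2, ← pow_mul, ← pow_succ']
  have hWtriv : ∀ w ∈ W, w = 1 := by
    intro w hw
    obtain ⟨n, hn⟩ := (IsPGroup.iff_card).mp hG
    obtain ⟨w', _, e⟩ := hiter n w hw
    rw [e, ← hn, pow_card_eq_one']
  have hag : ∀ g : G, a g = g := by
    intro g
    have h5 := hWtriv (phih a g) ⟨g, rfl⟩
    rw [phih_apply] at h5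
    exact (inv_mul_eq_one.mp h5).symm
  exact MulEquiv.ext fun g => by simpa using hag g
private lemma claim1 (hG : IsPGroup p G) (A : Subgroup (MulAut G))
    (hcop : (Nat.card A).Coprime p) {a : MulAut G} (ha : a ∈ A)
    (h : ∀ x : G ⧸ Sp p G, psim a (psim a x) = 1) : a = 1 := by
  have hfinA : Finite (MulAut G) :=
    Finite.of_injective (fun e => (e : G → G)) DFunLike.coe_injective
  have hfix : ∀ x : G ⧸ Sp p G, fm a (psim a x) = psim a x := by
    intro x
    have h1 := h x
    rw [psim_eq a (psim a x), inv_mul_eq_one] at h1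
    exact h1.symm
  have hfmx : ∀ x : G ⧸ Sp p G, fm a x = x * psim a x := by
    intro x
    rw [psim_eq]
    group
  have hk : ∀ (k : ℕ) (x : G ⧸ Sp p G), fm (a ^ k) x = x * (psim a x) ^ k := by
    intro k
    induction k with
    | zero => intro x; rw [pow_zero, fm_one, pow_zero, mul_one]; rfl
    | succ n ih =>
        intro x
        rw [pow_succ', fm_mul, MonoidHom.comp_apply, ih, map_mul, map_pow, hfix, hfmx,
          pow_succ]
        group
  have hap : ∀ g : G, ∃ x : G, phih (a ^ p) g = x ^ p := by
    intro g
    have h6 : fm (a ^ p) ((g : G) : G ⧸ Sp p G) = ((g : G) : G ⧸ Sp p G) := by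
      rw [hk p, qt_pow, mul_one]
    rw [fm_mk] at h6
    have h7 : ((a ^ p) g)⁻¹ * g ∈ Sp p G := QuotientGroup.eq.mp h6
    have h8 : g⁻¹ * (a ^ p) g ∈ Sp p G := by
      have := inv_mem h7
      simpa using this
    obtain ⟨x, hx⟩ := h8
    exact ⟨x, by rw [phih_apply]; exact hx.symm⟩
  have hap1 : a ^ p = 1 := aux_faithful hG A hcop (A.pow_mem ha p) hap
  have ho : orderOf a ∣ p := orderOf_dvd_of_pow_eq_one hap1
  have ho2 : orderOf a ∣ Nat.card A := by
    have h9 := orderOf_dvd_natCard (⟨a, ha⟩ : A)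
    have h10 : orderOf (A.subtype ⟨a, ha⟩) = orderOf (⟨a, ha⟩ : A) :=
      orderOf_injective A.subtype A.subtype_injective _
    rw [← h10] at h9
    exact h9
  have h11 : orderOf a ∣ 1 := by
    rw [← hcop]
    exact Nat.dvd_gcd ho2 ho
  rw [Nat.dvd_one, orderOf_eq_one_iff] at h11
  exact h11
private lemma sub_eq_of_le_of_card {M : Type*} [Group M] [Finite M] {H K : Subgroup M}
    (hle : H ≤ K) (hc : Nat.card K ≤ Nat.card H) : H = K := by
  have hinj := Subgroup.inclusion_injective hle
  have hcard : Nat.card H = Nat.card K :=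
    le_antisymm (Subgroup.card_le_of_le hle) hc
  have hbij : Function.Bijective (Subgroup.inclusion hle) :=
    (Nat.bijective_iff_injective_and_card _).mpr ⟨hinj, hcard⟩
  refine le_antisymm hle fun x hx => ?_
  obtain ⟨y, hy⟩ := hbij.2 ⟨x, hx⟩
  have h2 : (y : M) = x := congrArg Subtype.val hy
  rw [← h2]; exact y.2

private lemma hp_helper {X : Subgroup (G ⧸ Sp p G)} (hX : Nat.card X = p)
    {x : G ⧸ Sp p G} (hx : x ∈ X) (hx1 : x ≠ 1) : X = zpowers x := by
  have hle : zpowers x ≤ X := zpowers_le.mpr hx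
  have hord : orderOf x = p := by
    have hdvd : orderOf x ∣ p := orderOf_dvd_of_pow_eq_one (qt_pow x)
    rcases (Nat.Prime.eq_one_or_self_of_dvd hp.out _ hdvd) with h1 | h1
    · exact absurd (orderOf_eq_one_iff.mp h1) hx1
    · exact h1
  have hcard : Nat.card X ≤ Nat.card (zpowers x) := by
    rw [Nat.card_zpowers, hord, hX]
  exact (sub_eq_of_le_of_card hle hcard).symm

private lemma psim_eq_one_of_range_bot {a : MulAut G} (hG : IsPGroup p G)
    (A : Subgroup (MulAut G)) (hcop : (Nat.card A).Coprime p) (ha : a ∈ A)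
    (hr : (psim (p := p) a).range = ⊥) : a = 1 := by
  refine aux_faithful hG A hcop ha fun g => ?_
  have h1 : psim a ((g : G) : G ⧸ Sp p G) = 1 := by
    have := Subgroup.ext_iff.mp hr (psim a ((g : G) : G ⧸ Sp p G))
    simpa using this.mp ⟨_, rfl⟩
  rw [psim_mk, QuotientGroup.eq_one_iff] at h1
  obtain ⟨x, hx⟩ := h1
  exact ⟨x, hx.symm⟩

private lemma card_range_psim (hG : IsPGroup p G) (A : Subgroup (MulAut G))
    (hcop : (Nat.card A).Coprime p) {a : MulAut G} (ha : a ∈ A) (ha1 : a ≠ 1)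
    (hcyc : IsCyclic (Subgroup.closure {x : G | ∃ g : G, x = g⁻¹ * a g})) :
    Nat.card (psim (p := p) a).range = p := by
  have hset : (QuotientGroup.mk' (Sp p G)) '' {x : G | ∃ g : G, x = g⁻¹ * a g}
      = Set.range (psim (p := p) a) := by
    ext y
    constructor
    · rintro ⟨x, ⟨g, rfl⟩, rfl⟩
      exact ⟨(g : G ⧸ Sp p G), rfl⟩
    · rintro ⟨x, rfl⟩
      refine QuotientGroup.induction_on x fun g => ?_
      exact ⟨g⁻¹ * a g, ⟨g, rfl⟩, rfl⟩
  have hmap : Subgroup.map (QuotientGroup.mk' (Sp p G))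
      (Subgroup.closure {x : G | ∃ g : G, x = g⁻¹ * a g}) = (psim (p := p) a).range := by
    rw [MonoidHom.map_closure, hset, ← MonoidHom.coe_range, Subgroup.closure_eq]
  haveI := hcyc
  have hcyc2 : IsCyclic (psim (p := p) a).range := by
    rw [← hmap]
    exact isCyclic_of_surjective _ (MonoidHom.subgroupMap_surjective _ _)
  obtain ⟨gen, hgen⟩ := hcyc2.exists_generator
  have hz : zpowers gen = (⊤ : Subgroup (psim (p := p) a).range) :=
    (Subgroup.eq_top_iff' _).mpr hgen
  have hcard : Nat.card (psim (p := p) a).range = orderOf gen := by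
    rw [← Nat.card_zpowers, hz, Subgroup.card_top]
  have hordeq : orderOf ((psim (p := p) a).range.subtype gen) = orderOf gen :=
    orderOf_injective _ (Subgroup.subtype_injective _) _
  have hdvd : orderOf gen ∣ p := by
    rw [← hordeq]
    exact orderOf_dvd_of_pow_eq_one (qt_pow _)
  rcases (Nat.Prime.eq_one_or_self_of_dvd hp.out _ hdvd) with h1 | h1
  · exfalso
    apply ha1
    refine psim_eq_one_of_range_bot hG A hcop ha ?_
    rw [← Subgroup.card_eq_one, hcard, h1]
  · rw [hcard, h1]

private lemma card_ker_psim_eq {a : MulAut G} :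
    Nat.card (G ⧸ Sp p G) = Nat.card (psim (p := p) a).range * Nat.card (psim (p := p) a).ker := by
  have e1 := Subgroup.card_eq_card_quotient_mul_card_subgroup (psim (p := p) a).ker
  have e2 : Nat.card ((G ⧸ Sp p G) ⧸ (psim (p := p) a).ker)
      = Nat.card (psim (p := p) a).range :=
    Nat.card_congr (QuotientGroup.quotientKerEquivRange (psim (p := p) a)).toEquiv
  rw [e1, e2]

private lemma mem_ker_iff_fix {a : MulAut G} {x : G ⧸ Sp p G} :
    x ∈ (psim (p := p) a).ker ↔ fm a x = x := by
  rw [MonoidHom.mem_ker, psim_eq, inv_mul_eq_one, eq_comm]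

private lemma psim_range_stable {a : MulAut G} {y : G ⧸ Sp p G}
    (hy : y ∈ (psim (p := p) a).range) : fm a⁻¹ y ∈ (psim (p := p) a).range := by
  obtain ⟨x, rfl⟩ := hy
  refine ⟨fm a⁻¹ x, ?_⟩
  rw [psim_eq, psim_eq, map_mul, map_inv, fm_inv_fm, fm_fm_inv]

private lemma P2 (hG : IsPGroup p G) (A : Subgroup (MulAut G))
    (hcop : (Nat.card A).Coprime p)
    (hcon : ∀ a ∈ A, IsCyclic (Subgroup.closure {x : G | ∃ g : G, x = g⁻¹ * a g}))
    {a b : MulAut G} (ha : a ∈ A) (hb : b ∈ A) (ha1 : a ≠ 1) (hb1 : b ≠ 1)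
    (hK : (psim (p := p) a).ker ≠ (psim (p := p) b).ker) :
    (psim (p := p) a).range = (psim (p := p) b).range := by
  have hra : Nat.card (psim (p := p) a).range = p := card_range_psim hG A hcop ha ha1 (hcon a ha)
  have hrb : Nat.card (psim (p := p) b).range = p := card_range_psim hG A hcop hb hb1 (hcon b hb)
  have hkab : Nat.card (psim (p := p) a).ker = Nat.card (psim (p := p) b).ker := by
    have e1 := card_ker_psim_eq (p := p) (a := a)
    have e2 := card_ker_psim_eq (p := p) (a := b)
    rw [hra] at e1
    rw [hrb] at e2
    have hppos : 0 < p := hp.out.pos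
    exact Nat.eq_of_mul_eq_mul_left hppos (by rw [← e1, ← e2])
  have hnab : ¬ (psim (p := p) a).ker ≤ (psim (p := p) b).ker := fun h =>
    hK (sub_eq_of_le_of_card h (le_of_eq hkab.symm))
  have hnba : ¬ (psim (p := p) b).ker ≤ (psim (p := p) a).ker := fun h =>
    hK.symm (sub_eq_of_le_of_card h (le_of_eq hkab)) |>.elim
  obtain ⟨u, hu, hub⟩ := SetLike.not_le_iff_exists.mp hnab
  obtain ⟨w, hw, hwa⟩ := SetLike.not_le_iff_exists.mp hnba
  set c := a * b with hc
  have hcA : c ∈ A := mul_mem ha hb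
  have hc1 : c ≠ 1 := by
    intro h1
    apply hK
    have hbinv : b = a⁻¹ := by
      have h9 : a⁻¹ * (a * b) = a⁻¹ * 1 := by rw [← hc, h1]
      simpa [mul_assoc] using h9
    ext x
    rw [mem_ker_iff_fix, mem_ker_iff_fix, hbinv]
    constructor
    · intro h2
      conv_lhs => rw [← h2]
      exact fm_inv_fm a x
    · intro h2
      conv_lhs => rw [← h2]
      exact fm_fm_inv a x
  have hpsicu : psim (p := p) c u = fm a (psim b u) := by
    rw [psim_eq, hc, fm_mul, MonoidHom.comp_apply]
    have h3 : fm b u = u * psim b u := by rw [psim_eq]; group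
    rw [h3, map_mul, mem_ker_iff_fix.mp hu]
    group
  have hpsicw : psim (p := p) c w = psim a w := by
    rw [psim_eq, hc, fm_mul, MonoidHom.comp_apply, mem_ker_iff_fix.mp hw, psim_eq]
  have hpaw : psim (p := p) a w ≠ 1 := fun h => hwa (MonoidHom.mem_ker.mpr h)
  have hpbu : psim (p := p) b u ≠ 1 := fun h => hub (MonoidHom.mem_ker.mpr h)
  have hfapbu : fm a (psim (p := p) b u) ≠ 1 := by
    intro h4
    apply hpbu
    have := congrArg (fm a⁻¹) h4
    rwa [fm_inv_fm, map_one] at this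
  have hrc : Nat.card (psim (p := p) c).range = p := card_range_psim hG A hcop hcA hc1 (hcon c hcA)
  have hrceq : (psim (p := p) c).range = zpowers (psim a w) := by
    refine hp_helper hrc ?_ hpaw
    rw [← hpsicw]; exact ⟨w, rfl⟩
  have hraeq : (psim (p := p) a).range = zpowers (psim a w) :=
    hp_helper hra ⟨w, rfl⟩ hpaw
  have hmem : fm a (psim (p := p) b u) ∈ (psim (p := p) a).range := by
    rw [hraeq, ← hrceq, ← hpsicu]
    exact ⟨u, rfl⟩
  have hmem2 : psim (p := p) b u ∈ (psim (p := p) a).range := by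
    have h5 := psim_range_stable (p := p) (a := a) hmem
    rwa [fm_inv_fm] at h5
  have hrbeq : (psim (p := p) b).range = zpowers (psim b u) :=
    hp_helper hrb ⟨u, rfl⟩ hpbu
  have hle : zpowers (psim (p := p) b u) ≤ (psim (p := p) a).range := zpowers_le.mpr hmem2
  have hfin : Nat.card (psim (p := p) a).range ≤ Nat.card (zpowers (psim (p := p) b u)) := by
    rw [← hrbeq, hra, hrb]
  rw [hrbeq]
  exact (sub_eq_of_le_of_card hle hfin).symm
private lemma znat_pow {C : Type*} [Group C] {v y : C} (hv : 0 < orderOf v)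
    (h : y ∈ zpowers v) : ∃ n : ℕ, v ^ n = y := by
  obtain ⟨k, hk⟩ := Subgroup.mem_zpowers_iff.mp h
  refine ⟨(k % (orderOf v : ℤ)).toNat, ?_⟩
  have hnn : 0 ≤ k % (orderOf v : ℤ) :=
    Int.emod_nonneg k (by exact_mod_cast hv.ne')
  rw [← zpow_natCast, Int.toNat_of_nonneg hnn, zpow_mod_orderOf, hk]

private lemma embed_cyclic {B : Type*} [Group B] {C : Type*} [CommGroup C]
    {v : C} (hvord : orderOf v = p) (F : B → C → C)
    (hFhom : ∀ b, ∀ x y : C, F b (x * y) = F b x * F b y)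
    (hFmul : ∀ b₁ b₂ x, F (b₁ * b₂) x = F b₁ (F b₂ x))
    (hFone : F 1 v = v)
    (hFv : ∀ b, ∃ n : ℕ, F b v = v ^ n)
    (hinj : ∀ b, F b v = v → b = 1) : IsCyclic B := by
  classical
  have hFpow : ∀ b (x : C) (n : ℕ), F b (x ^ n) = (F b x) ^ n := by
    intro b x n
    have hone : F b 1 = 1 := by
      have h0 : F b 1 = F b 1 * F b 1 := by
        have := hFhom b 1 1
        rwa [mul_one] at this
      have h1 : F b 1 * F b 1 = F b 1 * 1 := by rw [mul_one]; exact h0.symm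
      exact mul_left_cancel h1
    induction n with
    | zero => simpa using hone
    | succ k ih => rw [pow_succ, pow_succ, hFhom, ih]
  let dlog : C → ZMod p := fun y =>
    if h : ∃ n : ℕ, v ^ n = y then ((Classical.choose h : ℕ) : ZMod p) else 0
  have hd1 : ∀ (y : C) (h : ∃ n : ℕ, v ^ n = y), v ^ (dlog y).val = y := by
    intro y h
    have hdef : dlog y = ((Classical.choose h : ℕ) : ZMod p) := dif_pos h
    rw [hdef, ZMod.val_natCast, ← hvord, pow_mod_orderOf]
    exact Classical.choose_spec h
  have hd2 : ∀ n : ℕ, dlog (v ^ n) = (n : ZMod p) := by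
    intro n
    have h : ∃ k : ℕ, v ^ k = v ^ n := ⟨n, rfl⟩
    have h1 : v ^ (dlog (v ^ n)).val = v ^ n := hd1 _ h
    have h2 : (dlog (v ^ n)).val ≡ n [MOD p] := by
      have := pow_eq_pow_iff_modEq.mp h1
      rwa [hvord] at this
    have h3 := (ZMod.natCast_eq_natCast_iff _ _ _).mpr h2
    rwa [ZMod.natCast_rightInverse (dlog (v ^ n))] at h3
  let χ : B →* ZMod p :=
    { toFun := fun b => dlog (F b v)
      map_one' := by
        show dlog (F 1 v) = 1
        rw [hFone]
        have h5 := hd2 1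
        rw [pow_one] at h5
        rw [h5, Nat.cast_one]
      map_mul' := by
        intro b₁ b₂
        obtain ⟨n₁, h1⟩ := hFv b₁
        obtain ⟨n₂, h2⟩ := hFv b₂
        have h4 : F (b₁ * b₂) v = v ^ (n₁ * n₂) := by
          rw [hFmul, h2, hFpow, h1, ← pow_mul]
        show dlog (F (b₁ * b₂) v) = dlog (F b₁ v) * dlog (F b₂ v)
        rw [h4, hd2, h1, h2, hd2, hd2, Nat.cast_mul] }
  have hchi_inj : Function.Injective χ.toHomUnits := by
    rw [injective_iff_map_eq_one]
    intro b hb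
    apply hinj
    have hb1 : χ b = 1 := by
      have h5 := congrArg Units.val hb
      rwa [MonoidHom.coe_toHomUnits, Units.val_one] at h5
    obtain ⟨n, hn⟩ := hFv b
    have h6 : dlog (F b v) = 1 := hb1
    rw [hn, hd2] at h6
    have h7 : (n : ZMod p) = ((1 : ℕ) : ZMod p) := by rwa [Nat.cast_one]
    have h8 : n ≡ 1 [MOD p] := (ZMod.natCast_eq_natCast_iff _ _ _).mp h7
    have h9 : v ^ n = v ^ 1 := pow_eq_pow_iff_modEq.mpr (by rwa [hvord])
    rw [hn, h9, pow_one]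
  exact isCyclic_of_surjective (MonoidHom.ofInjective hchi_inj).symm
    (MulEquiv.surjective _)

private lemma psim_fm_comm (a : MulAut G) (x : G ⧸ Sp p G) :
    psim a (fm a x) = fm a (psim a x) := by
  rw [psim_eq, psim_eq, map_mul, map_inv]

private lemma main_cyclic (hG : IsPGroup p G) (A : Subgroup (MulAut G))
    (hcop : (Nat.card A).Coprime p)
    (hcon : ∀ a ∈ A, IsCyclic (Subgroup.closure {x : G | ∃ g : G, x = g⁻¹ * a g})) :
    IsCyclic A := by
  have hp1 : p ≠ 1 := hp.out.ne_one
  by_cases htriv : ∀ a ∈ A, a = 1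
  · haveI : Subsingleton A :=
      ⟨fun x y => Subtype.ext (by rw [htriv x x.2, htriv y y.2])⟩
    exact isCyclic_of_subsingleton
  push_neg at htriv
  obtain ⟨a₀, ha₀, ha₀1⟩ := htriv
  have hra₀ : Nat.card (psim (p := p) a₀).range = p :=
    card_range_psim hG A hcop ha₀ ha₀1 (hcon a₀ ha₀)
  by_cases hker : ∀ b ∈ A, b ≠ 1 → (psim (p := p) b).ker = (psim (p := p) a₀).ker
  · -- Case A : common kernel
    have hstab : ∀ b : MulAut G, b ∈ A →
        (psim (p := p) a₀).ker ≤ ((psim (p := p) a₀).ker).comap (fm b) := by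
      intro b hb x hx
      rw [Subgroup.mem_comap]
      by_cases hb1 : b = 1
      · subst hb1
        rw [fm_one]
        exact hx
      · have hkb := hker b hb hb1
        rw [← hkb] at hx ⊢
        rw [mem_ker_iff_fix.mp hx]
        exact hx
    have hcardC : Nat.card ((G ⧸ Sp p G) ⧸ (psim (p := p) a₀).ker) = p := by
      have e1 := Subgroup.card_eq_card_quotient_mul_card_subgroup (psim (p := p) a₀).ker
      have e2 := card_ker_psim_eq (p := p) (a := a₀)
      rw [hra₀] at e2
      have hpos : 0 < Nat.card (psim (p := p) a₀).ker := Nat.card_pos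
      refine Nat.eq_of_mul_eq_mul_right hpos ?_
      rw [← e1, e2]
    obtain ⟨v, hv1⟩ : ∃ v : (G ⧸ Sp p G) ⧸ (psim (p := p) a₀).ker, v ≠ 1 := by
      rcases Subgroup.bot_or_exists_ne_one
          (⊤ : Subgroup ((G ⧸ Sp p G) ⧸ (psim (p := p) a₀).ker)) with h | h
      · exfalso
        have h2 : Nat.card (⊤ : Subgroup ((G ⧸ Sp p G) ⧸ (psim (p := p) a₀).ker)) = 1 := by
          rw [h]; exact Subgroup.card_bot
        rw [Subgroup.card_top, hcardC] at h2
        exact hp1 h2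
      · obtain ⟨v, _, hv⟩ := h
        exact ⟨v, hv⟩
    have hvord : orderOf v = p := by
      have hdvd := orderOf_dvd_natCard v
      rw [hcardC] at hdvd
      rcases (Nat.Prime.eq_one_or_self_of_dvd hp.out _ hdvd) with h1 | h1
      · exact absurd (orderOf_eq_one_iff.mp h1) hv1
      · exact h1
    have htop : zpowers v = (⊤ : Subgroup ((G ⧸ Sp p G) ⧸ (psim (p := p) a₀).ker)) := by
      refine sub_eq_of_le_of_card le_top ?_
      rw [Subgroup.card_top, hcardC, Nat.card_zpowers, hvord]
    have hallz : ∀ y : (G ⧸ Sp p G) ⧸ (psim (p := p) a₀).ker, ∃ n : ℕ, v ^ n = y := by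
      intro y
      refine znat_pow (by rw [hvord]; exact hp.out.pos) ?_
      rw [htop]; exact Subgroup.mem_top y
    let F : A → ((G ⧸ Sp p G) ⧸ (psim (p := p) a₀).ker) →
        ((G ⧸ Sp p G) ⧸ (psim (p := p) a₀).ker) := fun b =>
      QuotientGroup.map _ _ (fm (b : MulAut G)) (hstab (b : MulAut G) b.2)
    have hFmk : ∀ (b : A) (x : G ⧸ Sp p G),
        F b ((x : G ⧸ Sp p G) : (G ⧸ Sp p G) ⧸ (psim (p := p) a₀).ker)
          = ((fm (b : MulAut G) x : G ⧸ Sp p G) : (G ⧸ Sp p G) ⧸ (psim (p := p) a₀).ker) := by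
      intro b x
      exact QuotientGroup.map_mk _ _ _ _ x
    refine embed_cyclic hvord F ?_ ?_ ?_ ?_ ?_
    · intro b x y; exact map_mul _ _ _
    · intro b₁ b₂ x
      refine QuotientGroup.induction_on x fun y => ?_
      rw [hFmk, hFmk, hFmk]
      congr 1
      rw [Subgroup.coe_mul, fm_mul]
      rfl
    · refine QuotientGroup.induction_on v fun y => ?_
      rw [hFmk]
      congr 1
      rw [OneMemClass.coe_one, fm_one]
      rfl
    · intro b
      obtain ⟨n, hn⟩ := hallz (F b v)
      exact ⟨n, hn.symm⟩
    · intro b hbv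
      by_contra hbne
      have hb1 : (b : MulAut G) ≠ 1 := fun h => hbne (Subtype.ext h)
      have hFid : ∀ y : (G ⧸ Sp p G) ⧸ (psim (p := p) a₀).ker, F b y = y := by
        intro y
        obtain ⟨n, rfl⟩ := hallz y
        calc F b (v ^ n) = (F b v) ^ n := map_pow _ _ _
          _ = v ^ n := by rw [hbv]
      have hsub : ∀ x : G ⧸ Sp p G, psim (p := p) (b : MulAut G) x ∈ (psim (p := p) a₀).ker := by
        intro x
        have h2 : ((fm (b : MulAut G) x : G ⧸ Sp p G) : (G ⧸ Sp p G) ⧸ (psim (p := p) a₀).ker)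
            = ((x : G ⧸ Sp p G) : (G ⧸ Sp p G) ⧸ (psim (p := p) a₀).ker) := by
          rw [← hFmk]; exact hFid _
        have h3 : (fm (b : MulAut G) x)⁻¹ * x ∈ (psim (p := p) a₀).ker :=
          QuotientGroup.eq.mp h2
        have h4 := inv_mem h3
        rw [mul_inv_rev, inv_inv] at h4
        rw [psim_eq]
        exact h4
      have hb0 : (b : MulAut G) = 1 := by
        refine claim1 hG A hcop b.2 fun x => ?_
        have h5 := hsub x
        rw [← hker (b : MulAut G) b.2 hb1] at h5
        exact MonoidHom.mem_ker.mp h5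
      exact hb1 hb0
  · -- Case B : common range
    push_neg at hker
    obtain ⟨b₀, hb₀, hb₀1, hb₀K⟩ := hker
    have hkey : ∀ c, c ∈ A → c ≠ 1 → (psim (p := p) c).range = (psim (p := p) a₀).range := by
      intro c hc hc1
      by_cases h : (psim (p := p) c).ker = (psim (p := p) a₀).ker
      · have h2 : (psim (p := p) c).ker ≠ (psim (p := p) b₀).ker := by
          rw [h]; exact fun hh => hb₀K hh.symm
        rw [P2 hG A hcop hcon hc hb₀ hc1 hb₀1 h2]
        exact (P2 hG A hcop hcon ha₀ hb₀ ha₀1 hb₀1 fun hh => hb₀K hh.symm).symm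
      · exact P2 hG A hcop hcon hc ha₀ hc1 ha₀1 h
    obtain ⟨v, hvL, hv1⟩ : ∃ v, v ∈ (psim (p := p) a₀).range ∧ v ≠ 1 := by
      rcases Subgroup.bot_or_exists_ne_one (psim (p := p) a₀).range with h | h
      · exfalso
        have h2 : Nat.card (psim (p := p) a₀).range = 1 := by rw [h]; exact Subgroup.card_bot
        rw [hra₀] at h2
        exact hp1 h2
      · obtain ⟨v, hv, hv1⟩ := h
        exact ⟨v, hv, hv1⟩
    have hLz : (psim (p := p) a₀).range = zpowers v := hp_helper hra₀ hvL hv1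
    have hvord : orderOf v = p := by
      have h2 := hra₀
      rw [hLz, Nat.card_zpowers] at h2
      exact h2
    have hstab : ∀ b : MulAut G, b ∈ A → ∀ y, y ∈ (psim (p := p) a₀).range →
        fm b y ∈ (psim (p := p) a₀).range := by
      intro b hb y hy
      by_cases hb1 : b = 1
      · subst hb1; rw [fm_one]; exact hy
      · rw [← hkey b hb hb1] at hy ⊢
        obtain ⟨x, rfl⟩ := hy
        exact ⟨fm b x, psim_fm_comm b x⟩
    let F : A → (G ⧸ Sp p G) → (G ⧸ Sp p G) := fun b => fm (b : MulAut G)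
    refine embed_cyclic hvord F ?_ ?_ ?_ ?_ ?_
    · intro b x y; exact map_mul _ _ _
    · intro b₁ b₂ x
      show fm ((b₁ * b₂ : A) : MulAut G) x = fm (b₁ : MulAut G) (fm (b₂ : MulAut G) x)
      rw [Subgroup.coe_mul, fm_mul]
      rfl
    · show fm ((1 : A) : MulAut G) v = v
      rw [OneMemClass.coe_one, fm_one]
      rfl
    · intro b
      have h2 : fm (b : MulAut G) v ∈ (psim (p := p) a₀).range := hstab _ b.2 v hvL
      rw [hLz] at h2
      obtain ⟨n, hn⟩ := znat_pow (by rw [hvord]; exact hp.out.pos) h2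
      exact ⟨n, hn.symm⟩
    · intro b hbv
      by_contra hbne
      have hb1 : (b : MulAut G) ≠ 1 := fun h => hbne (Subtype.ext h)
      have hvker : v ∈ (psim (p := p) (b : MulAut G)).ker := mem_ker_iff_fix.mpr hbv
      have hrange_le : (psim (p := p) (b : MulAut G)).range
          ≤ (psim (p := p) (b : MulAut G)).ker := by
        rw [hkey _ b.2 hb1, hLz]
        exact zpowers_le.mpr hvker
      have hb0 : (b : MulAut G) = 1 := by
        refine claim1 hG A hcop b.2 fun x => ?_
        exact MonoidHom.mem_ker.mp (hrange_le ⟨x, rfl⟩)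
      exact hb1 hb0
end

theorem stmt_7 (p : ℕ) [Fact p.Prime] (G : Type*) [CommGroup G] [Finite G]
    (hG : IsPGroup p G) (hGnc : ¬ IsCyclic G)
    (A : Subgroup (MulAut G)) (hAnc : ¬ IsCyclic A)
    (hcop : (Nat.card A).Coprime p) :
    ∃ a ∈ A, ¬ IsCyclic (Subgroup.closure {x : G | ∃ g : G, x = g⁻¹ * a g}) := by
  by_contra hcon
  push_neg at hcon
  exact hAnc (main_cyclic hG A hcop hcon)
end

section
/- Let A be a noncyclic finite abelian group of automorphisms of a noncyclic finite abelian p-group G, with gcd(|A|, p) = 1. Then there exists a ∈ A such that [G,a] is not cyclic. -/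
open Subgroup

set_option linter.unusedSectionVars false

section S8

variable {p : ℕ} [Fact p.Prime] {G : Type*} [CommGroup G] [Finite G]

/-- The commutator map `g ↦ g⁻¹ * f g` as a monoid hom (G abelian). -/
def s8phi (f : MulAut G) : G →* G where
  toFun g := g⁻¹ * f g
  map_one' := by simp
  map_mul' x y := by
    show (x*y)⁻¹ * f (x*y) = _
    rw [mul_inv, map_mul]
    exact mul_mul_mul_comm _ _ _ _

lemma s8phi_apply (f : MulAut G) (g : G) : s8phi f g = g⁻¹ * f g := rfl

variable (p) in
/-- `Ω₁(G)`. -/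
def s8Om : Subgroup G := (powMonoidHom p : G →* G).ker

lemma s8mem_Om {x : G} : x ∈ s8Om p (G := G) ↔ x ^ p = 1 := Iff.rfl

variable (p) in
def s8W (f : MulAut G) : Subgroup G := (s8Om p).map (s8phi f)

lemma s8aut_Om (f : MulAut G) {x : G} (hx : x ∈ s8Om p (G := G)) : f x ∈ s8Om p (G := G) := by
  rw [s8mem_Om] at hx ⊢
  rw [← map_pow, hx, map_one]

lemma s8W_le_Om (f : MulAut G) : s8W p f ≤ s8Om p := by
  rintro y ⟨x, hx, rfl⟩
  simp only [SetLike.mem_coe, s8mem_Om] at hx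
  rw [s8mem_Om]
  rw [s8phi_apply, mul_pow, inv_pow, ← map_pow, hx, map_one]
  simp


/-- A coprime automorphism nontrivial on `G` is nontrivial on `Ω₁`. -/
lemma s8faithful (hG : IsPGroup p G) {f : MulAut G} (hm : (orderOf f).Coprime p)
    (hf : f ≠ 1) : ∃ v ∈ s8Om p (G := G), f v ≠ v := by
  have hp : p.Prime := Fact.out
  by_contra hcon
  push_neg at hcon
  have hcon' : ∀ v : G, v ^ p = 1 → f v = v := fun v hv => hcon v (s8mem_Om.mpr hv)
  have key : ∀ n : ℕ, ∀ g : G, orderOf g ≤ n → f g = g := by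
    intro n
    induction n with
    | zero => exact fun g hg => absurd (orderOf_pos g) (by omega)
    | succ n ih =>
      intro g hg
      rcases Nat.lt_or_ge (orderOf g) (n+1) with h | h
      · exact ih g (by omega)
      have hord : orderOf g = n + 1 := le_antisymm hg h
      obtain ⟨k, hk⟩ := hG g
      obtain ⟨j, hjk, hoj⟩ := (Nat.dvd_prime_pow hp).mp (orderOf_dvd_of_pow_eq_one hk)
      rcases Nat.eq_zero_or_pos j with hj0 | hj1
      · have : g = 1 := orderOf_eq_one_iff.mp (by rw [hoj, hj0, pow_zero])
        rw [this, map_one]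
      -- f fixes g^p by induction
      have hlt : orderOf (g ^ p) ≤ n := by
        have hdvd : orderOf (g ^ p) ∣ p ^ (j - 1) := by
          apply orderOf_dvd_of_pow_eq_one
          rw [← pow_mul]
          have hpe : p * p ^ (j - 1) = p ^ j := by
            conv_rhs => rw [show j = (j - 1) + 1 by omega]
            rw [pow_succ']
          rw [hpe, ← hoj]
          exact pow_orderOf_eq_one g
        have h1 : orderOf (g ^ p) ≤ p ^ (j - 1) :=
          Nat.le_of_dvd (pow_pos hp.pos _) hdvd
        have h2 : p ^ (j - 1) < p ^ j :=
          Nat.pow_lt_pow_right hp.one_lt (by omega)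
        omega
      have hgp : f (g ^ p) = g ^ p := ih _ hlt
      set v := g⁻¹ * f g with hvdef
      have hv : v ^ p = 1 := by
        rw [hvdef, mul_pow, inv_pow, ← map_pow, hgp]
        simp
      have hfv : f v = v := hcon' v hv
      have hfg : f g = g * v := by rw [hvdef]; group
      have hfvi : ∀ i : ℕ, (f ^ i) v = v := by
        intro i
        induction i with
        | zero => rfl
        | succ i ihv => rw [pow_succ, MulAut.mul_apply, hfv, ihv]
      have hpow : ∀ i : ℕ, (f ^ i) g = g * v ^ i := by
        intro i
        induction i with
        | zero => simp
        | succ i ihi =>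
          rw [pow_succ, MulAut.mul_apply, hfg, map_mul, ihi, hfvi, pow_succ, mul_assoc]
      have hm1 : (f ^ orderOf f) g = g := by rw [pow_orderOf_eq_one]; rfl
      rw [hpow (orderOf f)] at hm1
      have hvm : v ^ orderOf f = 1 :=
        mul_left_cancel (hm1.trans (mul_one g).symm)
      have : orderOf v ∣ Nat.gcd (orderOf f) p :=
        Nat.dvd_gcd (orderOf_dvd_of_pow_eq_one hvm) (orderOf_dvd_of_pow_eq_one hv)
      rw [hm] at this
      have hv1 : v = 1 := orderOf_eq_one_iff.mp (Nat.dvd_one.mp this)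
      rw [hvdef] at hv1
      exact (inv_mul_eq_one.mp hv1).symm
  exact hf (DFunLike.ext f 1 fun g => (key (orderOf g) g le_rfl).trans rfl)


lemma s8pow_comm_mem (f : MulAut G) {x : G} (hx : x ∈ s8Om p (G := G)) (i : ℕ) :
    x⁻¹ * (f ^ i) x ∈ s8W p f := by
  induction i with
  | zero => simpa using (s8W p f).one_mem
  | succ i ih =>
    have h1 : (f ^ (i+1)) x = f ((f ^ i) x) := by
      rw [pow_succ']; rfl
    have h2 : x⁻¹ * (f ^ (i+1)) x
        = (x⁻¹ * (f ^ i) x) * (((f ^ i) x)⁻¹ * f ((f ^ i) x)) := by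
      rw [h1]; group
    rw [h2]
    refine mul_mem ih ?_
    have hmem : (f ^ i) x ∈ s8Om p (G := G) := s8aut_Om (f ^ i) hx
    exact ⟨(f ^ i) x, hmem, rfl⟩

/-- Coprime decomposition on `Ω₁`: every `x ∈ Ω₁` is `c * w` with `c` fixed and `w ∈ W f`. -/
lemma s8decomp {f : MulAut G} (hm : (orderOf f).Coprime p) {x : G}
    (hx : x ∈ s8Om p (G := G)) :
    ∃ c ∈ s8Om p (G := G), f c = c ∧ x * c⁻¹ ∈ s8W p f := by
  have hp : p.Prime := Fact.out
  set m := orderOf f with hmdef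
  set s : G := ∏ i ∈ Finset.range m, (f ^ i) x with hsdef
  have hxp : x ^ p = 1 := hx
  -- f fixes s
  have hfs : f s = s := by
    rw [hsdef, map_prod]
    have h1 : ∀ i, f ((f ^ i) x) = (f ^ (i+1)) x := by
      intro i; rw [pow_succ']; rfl
    calc (∏ i ∈ Finset.range m, f ((f ^ i) x))
        = ∏ i ∈ Finset.range m, (f ^ (i+1)) x := by
          exact Finset.prod_congr rfl fun i _ => h1 i
      _ = ∏ i ∈ Finset.range m, (f ^ i) x := by
          have e1 := Finset.prod_range_succ' (fun i => (f ^ i) x) m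
          have e2 := Finset.prod_range_succ (fun i => (f ^ i) x) m
          have e3 : (f ^ m) x = (f ^ (0:ℕ)) x := by
            rw [hmdef, pow_orderOf_eq_one, pow_zero]
          rw [e3] at e2
          have h := e1.symm.trans e2
          rw [pow_zero] at h
          simp only [MulAut.one_apply] at h
          exact mul_right_cancel h
  have hsOm : s ∈ s8Om p (G := G) := by
    rw [s8mem_Om, hsdef, ← Finset.prod_pow]
    refine Finset.prod_eq_one fun i _ => ?_
    rw [← map_pow, hxp, map_one]
  -- inverse of m mod p
  have hm1 : 1 < p := hp.one_lt
  obtain ⟨e, -, he⟩ := Nat.exists_mul_mod_eq_one_of_coprime hm hm1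
  have hme : m * e % p = 1 := he
  refine ⟨s ^ e, ?_, ?_, ?_⟩
  · rw [s8mem_Om, ← pow_mul, mul_comm e p, pow_mul, (s8mem_Om.mp hsOm), one_pow]
  · rw [map_pow, hfs]
  · -- x * (s^e)⁻¹ ∈ W f
    have ht : (x ^ m * s⁻¹) ^ e ∈ s8W p f := by
      refine pow_mem ?_ e
      have : x ^ m * s⁻¹ = ∏ i ∈ Finset.range m, (x * ((f ^ i) x)⁻¹) := by
        rw [Finset.prod_mul_distrib, Finset.prod_const, Finset.card_range, hsdef,
          ← Finset.prod_inv_distrib]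
      rw [this]
      refine Subgroup.prod_mem _ fun i _ => ?_
      have := (s8W p f).inv_mem (s8pow_comm_mem f hx i)
      simpa [mul_comm] using this
    have hxme : x ^ (m * e) = x := by
      have hpos : 1 ≤ m * e := by
        rcases Nat.eq_zero_or_pos (m * e) with h0 | h0
        · rw [h0, Nat.zero_mod] at hme; omega
        · exact h0
      have hdvd : p ∣ m * e - 1 := by
        have h2 : m * e % p = 1 % p := by rw [hme, Nat.mod_eq_of_lt hm1]
        exact (Nat.modEq_iff_dvd' hpos).mp h2.symm
      obtain ⟨q, hq⟩ := hdvd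
      have hmeq : m * e = 1 + p * q := by omega
      rw [hmeq, pow_add, pow_one, pow_mul, hxp, one_pow, mul_one]
    have hkey : s ^ e * (x ^ m * s⁻¹) ^ e = x := by
      rw [← mul_pow]
      have hss : s * (x ^ m * s⁻¹) = x ^ m := by
        rw [mul_comm (x ^ m) s⁻¹, ← mul_assoc, mul_inv_cancel, one_mul]
      rw [hss, ← pow_mul, hxme]
    have hx2 : x * (s ^ e)⁻¹ = (x ^ m * s⁻¹) ^ e :=
      mul_inv_eq_iff_eq_mul.mpr (by rw [mul_comm]; exact hkey.symm)
    rw [hx2]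
    exact ht


lemma s8W_inv {f g : MulAut G} (hfg : f * g = g * f) {y : G} (hy : y ∈ s8W p g) :
    f y ∈ s8W p g := by
  obtain ⟨x, hx, rfl⟩ := hy
  simp only [SetLike.mem_coe] at hx
  have hcomm : f (g x) = g (f x) := by
    have := congrArg (fun h : MulAut G => h x) hfg
    simpa [MulAut.mul_apply] using this
  refine ⟨f x, s8aut_Om f hx, ?_⟩
  rw [s8phi_apply, s8phi_apply, map_mul, map_inv, hcomm]

lemma s8isCyclic_of_le {U R : Subgroup G} (h : U ≤ R) (hR : IsCyclic R) : IsCyclic U := by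
  haveI := hR
  exact isCyclic_of_surjective (Subgroup.subgroupOfEquivOfLe h)
    (Subgroup.subgroupOfEquivOfLe h).surjective

lemma s8card_dvd_p {U : Subgroup G} (hU : U ≤ s8Om p) (hc : IsCyclic U) :
    Nat.card U ∣ p := by
  obtain ⟨g, hg⟩ := hc.exists_generator
  have h1 : orderOf g = Nat.card U := orderOf_eq_card_of_forall_mem_zpowers hg
  have h2 : g ^ p = 1 := by
    have : ((g : G)) ^ p = 1 := s8mem_Om.mp (hU g.2)
    exact Subtype.ext (by simpa using this)
  rw [← h1]
  exact orderOf_dvd_of_pow_eq_one h2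

lemma s8W_le_range (f : MulAut G) : s8W p f ≤ (s8phi f).range := by
  rintro y ⟨x, _, rfl⟩
  exact ⟨x, rfl⟩

lemma s8card_W {f : MulAut G} (hcyc : IsCyclic ((s8phi f).range : Subgroup G))
    (hne : ∃ v ∈ s8Om p (G := G), f v ≠ v) : Nat.card (s8W p f) = p := by
  have hp : p.Prime := Fact.out
  have hdvd : Nat.card (s8W p f) ∣ p :=
    s8card_dvd_p (s8W_le_Om f) (s8isCyclic_of_le (s8W_le_range f) hcyc)
  have hbot : (s8W p f) ≠ ⊥ := by
    obtain ⟨v, hv, hfv⟩ := hne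
    intro hb
    have hmem : s8phi f v ∈ s8W p f := ⟨v, hv, rfl⟩
    rw [hb, Subgroup.mem_bot, s8phi_apply, inv_mul_eq_one] at hmem
    exact hfv hmem.symm
  have h1 : 1 < Nat.card (s8W p f) := (Subgroup.one_lt_card_iff_ne_bot _).mpr hbot
  rcases (Nat.dvd_prime hp).mp hdvd with h | h
  · omega
  · exact h

/-- Dichotomy: if `W a ≠ W b` (both of order p) then `a` fixes `W b` pointwise. -/
lemma s8fix_of_ne {a b : MulAut G} (hcomm : a * b = b * a)
    (hca : Nat.card (s8W p a) = p) (hcb : Nat.card (s8W p b) = p)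
    (hne : s8W p a ≠ s8W p b) : ∀ w ∈ s8W p b, a w = w := by
  by_contra hc
  push_neg at hc
  obtain ⟨w, hwb, hww⟩ := hc
  set t := s8phi a w with htdef
  have htne : t ≠ 1 := by
    rw [htdef, s8phi_apply, Ne, inv_mul_eq_one]
    exact fun h => hww h.symm
  have htA : t ∈ s8W p a := ⟨w, s8W_le_Om b hwb, rfl⟩
  have htB : t ∈ s8W p b := by
    rw [htdef, s8phi_apply]
    exact mul_mem (inv_mem hwb) (s8W_inv hcomm hwb)
  have hop : orderOf t = p := by
    have hdvd : orderOf t ∣ p := orderOf_dvd_of_pow_eq_one (s8mem_Om.mp (s8W_le_Om a htA))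
    rcases (Nat.dvd_prime Fact.out).mp hdvd with h | h
    · exact absurd (orderOf_eq_one_iff.mp h) htne
    · exact h
  have hza : Subgroup.zpowers t = s8W p a := by
    refine Subgroup.eq_of_le_of_card_ge ((Subgroup.zpowers_le).mpr htA) ?_
    rw [hca, Nat.card_zpowers, hop]
  have hzb : Subgroup.zpowers t = s8W p b := by
    refine Subgroup.eq_of_le_of_card_ge ((Subgroup.zpowers_le).mpr htB) ?_
    rw [hcb, Nat.card_zpowers, hop]
  exact hne (hza.symm.trans hzb)

end S8

theorem stmt_8 (p : ℕ) [Fact p.Prime] (G : Type*) [CommGroup G] [Finite G]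
    (hG : IsPGroup p G) (hGnc : ¬ IsCyclic G)
    (A : Subgroup (MulAut G)) (hAnc : ¬ IsCyclic A)
    (hAab : ∀ a ∈ A, ∀ b ∈ A, a * b = b * a)
    (hcop : (Nat.card A).Coprime p) :
    ∃ a ∈ A, ¬ IsCyclic (Subgroup.closure {x : G | ∃ g : G, x = g⁻¹ * a g}) := by
  classical
  have hp : p.Prime := Fact.out
  by_contra hcon
  push_neg at hcon
  have hset : ∀ f : MulAut G,
      Subgroup.closure {x : G | ∃ g : G, x = g⁻¹ * f g} = (s8phi f).range := by
    intro f
    have h : {x : G | ∃ g : G, x = g⁻¹ * f g} = ((s8phi f).range : Set G) := by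
      ext x
      constructor
      · rintro ⟨g, rfl⟩; exact ⟨g, rfl⟩
      · rintro ⟨g, rfl⟩; exact ⟨g, rfl⟩
    rw [h, Subgroup.closure_eq]
  have hcyc : ∀ f ∈ A, IsCyclic ((s8phi f).range : Subgroup G) := fun f hf =>
    hset f ▸ hcon f hf
  have hord : ∀ f ∈ A, (orderOf f).Coprime p := fun f hf =>
    Nat.Coprime.coprime_dvd_left (Subgroup.orderOf_dvd_natCard A hf) hcop
  have hfaith : ∀ f ∈ A, f ≠ 1 → ∃ v ∈ s8Om p (G := G), f v ≠ v := fun f hf h1 =>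
    s8faithful hG (hord f hf) h1
  have hcard : ∀ f ∈ A, f ≠ 1 → Nat.card (s8W p f) = p := fun f hf h1 =>
    s8card_W (hcyc f hf) (hfaith f hf h1)
  by_cases hcase : ∀ a ∈ A, ∀ b ∈ A, a ≠ 1 → b ≠ 1 → s8W p a = s8W p b
  · -- all commutator subgroups on Ω₁ coincide: A embeds in (ZMod p)ˣ
    rcases Subgroup.bot_or_exists_ne_one A with hbot | ⟨a₀, ha₀A, ha₀⟩
    · exact hAnc (hbot ▸ inferInstance)
    set L := s8W p a₀ with hLdef
    have hLcard : Nat.card L = p := hcard a₀ ha₀A ha₀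
    have hLcyc : IsCyclic L := s8isCyclic_of_le (s8W_le_range a₀) (hcyc a₀ ha₀A)
    obtain ⟨g, hg⟩ := hLcyc.exists_generator
    set u : G := (g : G) with hudef
    have huL : u ∈ L := g.2
    have hou : orderOf u = p := by
      rw [hudef, Subgroup.orderOf_coe, orderOf_eq_card_of_forall_mem_zpowers hg, hLcard]
    have hLu : ∀ y ∈ L, ∃ n : ℕ, y = u ^ n := by
      intro y hy
      obtain ⟨k, hk⟩ := Subgroup.mem_zpowers_iff.mp (hg ⟨y, hy⟩)
      have h1 : u ^ k = y := by
        have := congrArg (Subtype.val) hk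
        simpa [SubgroupClass.coe_zpow] using this
      obtain ⟨n, hn⟩ := Submonoid.mem_powers_iff y u |>.mp
        (mem_powers_iff_mem_zpowers.mpr ⟨k, h1⟩)
      exact ⟨n, hn.symm⟩
    have huInv : ∀ f ∈ A, f u ∈ L := by
      intro f hf
      by_cases h1 : f = 1
      · rw [h1]; simpa using huL
      · have hWf : s8W p f = L := hcase f hf a₀ ha₀A h1 ha₀
        have h2 : f u ∈ s8W p f := s8W_inv rfl (hWf ▸ huL)
        rwa [hWf] at h2
    have keyA : ∀ x : A, ∃ n : ℕ, (x : MulAut G) u = u ^ n := fun x =>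
      hLu _ (huInv _ x.2)
    choose nn hnn using keyA
    set F : A → ZMod p := fun x => (nn x : ZMod p) with hFdef
    have hFmul : ∀ x y : A, F (x * y) = F x * F y := by
      intro x y
      have h2 := hnn (x * y)
      have h3 : ((x * y : A) : MulAut G) u = (x : MulAut G) ((y : MulAut G) u) := rfl
      rw [h3, hnn y, map_pow, hnn x, ← pow_mul] at h2
      have hmod : nn (x * y) ≡ nn x * nn y [MOD p] := by
        rw [← hou]
        exact pow_eq_pow_iff_modEq.mp (h2.symm.trans rfl)
      have := (ZMod.natCast_eq_natCast_iff _ _ _).mpr hmod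
      simpa [hFdef, Nat.cast_mul] using this
    have hF1 : F 1 = 1 := by
      have h2 := hnn 1
      have h3 : ((1 : A) : MulAut G) u = u := rfl
      rw [h3] at h2
      have hmod : (1 : ℕ) ≡ nn 1 [MOD p] := by
        rw [← hou]
        exact pow_eq_pow_iff_modEq.mp (by rw [pow_one]; exact h2)
      have := (ZMod.natCast_eq_natCast_iff _ _ _).mpr hmod
      simpa [hFdef] using this.symm
    have hF0 : ∀ x : A, F x ≠ 0 := by
      intro x hx0
      have hdvd : p ∣ nn x := (ZMod.natCast_eq_zero_iff _ _).mp hx0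
      have h1 : u ^ nn x = 1 := by
        obtain ⟨c, hc⟩ := hdvd
        rw [hc, pow_mul, ← hou, pow_orderOf_eq_one, one_pow]
      have h2 : (x : MulAut G) u = 1 := by rw [hnn x, h1]
      have h3 : u = 1 := (x : MulAut G).injective (by rw [h2, map_one])
      rw [h3, orderOf_one] at hou
      exact hp.one_lt.ne' hou.symm
    have hF0' := hF0
    let ψ : A →* (ZMod p)ˣ :=
      { toFun := fun x => Units.mk0 (F x) (hF0 x),
        map_one' := Units.ext (by simpa using hF1),
        map_mul' := fun x y => Units.ext (by simpa using hFmul x y) }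
    have hinj : Function.Injective ψ := by
      rw [injective_iff_map_eq_one]
      intro x hx
      have hFx : F x = 1 := by
        have := congrArg Units.val hx
        simpa [ψ] using this
      have hmod : nn x ≡ 1 [MOD p] :=
        (ZMod.natCast_eq_natCast_iff _ _ _).mp (by simpa [hFdef] using hFx)
      have hxu : (x : MulAut G) u = u := by
        rw [hnn x]
        have : u ^ nn x = u ^ 1 := pow_eq_pow_iff_modEq.mpr (by rw [hou]; exact hmod)
        simpa using this
      by_contra hx1
      have hxne : (x : MulAut G) ≠ 1 := fun h => hx1 (by
        apply Subtype.ext; simpa using h)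
      have hfixL : ∀ y ∈ L, (x : MulAut G) y = y := by
        intro y hy
        obtain ⟨n, rfl⟩ := hLu y hy
        rw [map_pow, hxu]
      have hWx : s8W p (x : MulAut G) = L := hcase _ x.2 a₀ ha₀A hxne ha₀
      have hfixOm : ∀ z ∈ s8Om p (G := G), (x : MulAut G) z = z := by
        intro z hz
        obtain ⟨c, hc, hxc, hw⟩ := s8decomp (hord _ x.2) hz
        have h1 : (x : MulAut G) (z * c⁻¹) = z * c⁻¹ := hfixL _ (hWx ▸ hw)
        have h2 : z = c * (z * c⁻¹) := by rw [mul_comm z c⁻¹, mul_inv_cancel_left]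
        calc (x : MulAut G) z = (x : MulAut G) (c * (z * c⁻¹)) := by rw [← h2]
          _ = (x : MulAut G) c * (x : MulAut G) (z * c⁻¹) := map_mul _ _ _
          _ = c * (z * c⁻¹) := by rw [hxc, h1]
          _ = z := h2.symm
      obtain ⟨v, hv, hvne⟩ := hfaith _ x.2 hxne
      exact hvne (hfixOm v hv)
    have hAcyc : IsCyclic A := by
      haveI : IsCyclic (ZMod p)ˣ := inferInstance
      let e := MonoidHom.ofInjective hinj
      exact isCyclic_of_surjective e.symm e.symm.surjective
    exact hAnc hAcyc
  · -- two distinct commutator lines: contradiction with cyclicity of [G, ab]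
    push_neg at hcase
    obtain ⟨a, haA, b, hbA, ha1, hb1, hWne⟩ := hcase
    have hcomm := hAab a haA b hbA
    have hfixb : ∀ w ∈ s8W p b, a w = w :=
      s8fix_of_ne hcomm (hcard a haA ha1) (hcard b hbA hb1) hWne
    have hfixa : ∀ w ∈ s8W p a, b w = w :=
      s8fix_of_ne hcomm.symm (hcard b hbA hb1) (hcard a haA ha1) hWne.symm
    have hWa_le : s8W p a ≤ s8W p (a * b) := by
      rintro y ⟨x, hx, rfl⟩
      simp only [SetLike.mem_coe] at hx
      obtain ⟨c, hc, hbc, hw⟩ := s8decomp (hord b hbA) hx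
      have hxc : x = c * (x * c⁻¹) := by rw [mul_comm x c⁻¹, mul_inv_cancel_left]
      have h2 : s8phi a (x * c⁻¹) = 1 := by
        rw [s8phi_apply, inv_mul_eq_one]
        exact (hfixb _ hw).symm
      have h1 : s8phi a x = s8phi a c := by
        calc s8phi a x = s8phi a (c * (x * c⁻¹)) := by rw [← hxc]
          _ = s8phi a c * s8phi a (x * c⁻¹) := map_mul _ _ _
          _ = s8phi a c := by rw [h2, mul_one]
      have h3 : s8phi (a * b) c = s8phi a c := by
        rw [s8phi_apply, s8phi_apply, MulAut.mul_apply, hbc]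
      exact ⟨c, hc, h3.trans h1.symm⟩
    have hWb_le : s8W p b ≤ s8W p (a * b) := by
      rintro y ⟨x, hx, rfl⟩
      simp only [SetLike.mem_coe] at hx
      obtain ⟨c, hc, hac, hw⟩ := s8decomp (hord a haA) hx
      have hxc : x = c * (x * c⁻¹) := by rw [mul_comm x c⁻¹, mul_inv_cancel_left]
      have h2 : s8phi b (x * c⁻¹) = 1 := by
        rw [s8phi_apply, inv_mul_eq_one]
        exact (hfixa _ hw).symm
      have h1 : s8phi b x = s8phi b c := by
        calc s8phi b x = s8phi b (c * (x * c⁻¹)) := by rw [← hxc]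
          _ = s8phi b c * s8phi b (x * c⁻¹) := map_mul _ _ _
          _ = s8phi b c := by rw [h2, mul_one]
      have habc : a (b c) = b c := by
        have h4 : a (b c) = b (a c) := by
          have := congrArg (fun h : MulAut G => h c) hcomm
          simpa [MulAut.mul_apply] using this
        rw [h4, hac]
      have h3 : s8phi (a * b) c = s8phi b c := by
        rw [s8phi_apply, s8phi_apply, MulAut.mul_apply, habc]
      exact ⟨c, hc, h3.trans h1.symm⟩
    have habA : a * b ∈ A := mul_mem haA hbA
    have hUle : s8W p a ⊔ s8W p b ≤ (s8phi (a * b)).range :=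
      sup_le (hWa_le.trans (s8W_le_range _)) (hWb_le.trans (s8W_le_range _))
    have hUcyc : IsCyclic (s8W p a ⊔ s8W p b : Subgroup G) :=
      s8isCyclic_of_le hUle (hcyc _ habA)
    have hUOm : s8W p a ⊔ s8W p b ≤ s8Om p := sup_le (s8W_le_Om a) (s8W_le_Om b)
    have hUdvd : Nat.card (s8W p a ⊔ s8W p b : Subgroup G) ∣ p := s8card_dvd_p hUOm hUcyc
    have hpU : p ∣ Nat.card (s8W p a ⊔ s8W p b : Subgroup G) := by
      have hd : Nat.card (s8W p a : Subgroup G) ∣ Nat.card (s8W p a ⊔ s8W p b : Subgroup G) :=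
        Subgroup.card_dvd_of_le le_sup_left
      rwa [hcard a haA ha1] at hd
    have hUp : Nat.card (s8W p a ⊔ s8W p b : Subgroup G) = p := Nat.dvd_antisymm hUdvd hpU
    have hWaU : s8W p a = s8W p a ⊔ s8W p b :=
      Subgroup.eq_of_le_of_card_ge le_sup_left (by rw [hUp, hcard a haA ha1])
    have hWbU : s8W p b = s8W p a ⊔ s8W p b :=
      Subgroup.eq_of_le_of_card_ge le_sup_right (by rw [hUp, hcard b hbA hb1])
    exact hWne (hWaU.trans hWbU.symm)
end

section
/- Let G be a (possibly infinite) group covered by m cyclic subgroups. Then G has a finite normal subgroup Δ whose order is bounded by a function of m only, such that G/Δ is cyclic. -/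
open Subgroup
open scoped Pointwise
open scoped commutatorElement

private lemma zpowersIsCyclic {G : Type*} [Group G] (a : G) :
    IsCyclic (Subgroup.zpowers a) := by
  refine ⟨⟨⟨a, Subgroup.mem_zpowers a⟩, ?_⟩⟩
  rintro ⟨x, hx⟩
  obtain ⟨k, hk⟩ := Subgroup.mem_zpowers_iff.mp hx
  exact ⟨k, Subtype.ext (by simpa using hk)⟩

private lemma neumann {G : Type} [Group G] {m : ℕ} (c : Fin m → G)
    (hcov : ∀ g : G, ∃ i, g ∈ Subgroup.zpowers (c i)) :
    ∃ i, (Subgroup.zpowers (c i)).FiniteIndex ∧ (Subgroup.zpowers (c i)).index ≤ m := by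
  classical
  have hcovers : ⋃ i ∈ (Finset.univ : Finset (Fin m)),
      (fun _ : Fin m => (1 : G)) i • ((Subgroup.zpowers (c i) : Subgroup G) : Set G)
        = Set.univ := by
    ext g
    simp only [one_smul, Set.mem_iUnion, Set.mem_univ, iff_true, Finset.mem_univ,
      exists_true_left, SetLike.mem_coe]
    exact hcov g
  obtain ⟨i, -, hfi, hle⟩ := Subgroup.exists_index_le_card_of_leftCoset_cover hcovers
  refine ⟨i, hfi, ?_⟩
  simpa using hle

private lemma relindex_centralizer_le {G : Type} [Group G] {m : ℕ} (c : Fin m → G)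
    (hcov : ∀ g : G, ∃ i, g ∈ Subgroup.zpowers (c i)) (D : Subgroup G)
    (hab : ∀ x ∈ D, ∀ y ∈ D, x * y = y * x) (g₀ : G) :
    (Subgroup.centralizer {g₀}).relIndex D ≤ m ∧
      (Subgroup.centralizer {g₀}).relIndex D ≠ 0 := by
  classical
  set F := (Subgroup.centralizer {g₀}).subgroupOf D with hF
  have key : ∀ (x₁ x₂ : D) (j : Fin m), g₀ * x₁ ∈ Subgroup.zpowers (c j) →
      g₀ * x₂ ∈ Subgroup.zpowers (c j) → (x₁⁻¹ * x₂ : D) ∈ F := by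
    intro x₁ x₂ j h1 h2
    rw [hF, Subgroup.mem_subgroupOf, Subgroup.mem_centralizer_iff]
    intro y hy
    rw [Set.mem_singleton_iff] at hy
    rw [hy]
    set w : G := ((x₁⁻¹ * x₂ : D) : G) with hw
    have hwD : w ∈ D := (x₁⁻¹ * x₂ : D).2
    have hwZ : w ∈ Subgroup.zpowers (c j) := by
      have hmm : (g₀ * (x₁ : G))⁻¹ * (g₀ * (x₂ : G)) ∈ Subgroup.zpowers (c j) :=
        mul_mem (inv_mem h1) h2
      have e : (g₀ * (x₁ : G))⁻¹ * (g₀ * (x₂ : G)) = w := by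
        rw [hw]
        push_cast
        group
      rwa [e] at hmm
    obtain ⟨k1, hk1⟩ := Subgroup.mem_zpowers_iff.mp h1
    obtain ⟨k2, hk2⟩ := Subgroup.mem_zpowers_iff.mp hwZ
    have hcomm : Commute (g₀ * (x₁ : G)) w := by
      rw [← hk1, ← hk2]; exact (Commute.refl (c j)).zpow_zpow k1 k2
    have hx1w : Commute (x₁ : G) w := hab x₁ x₁.2 w hwD
    have hx1w' : (x₁ : G)⁻¹ * w = w * (x₁ : G)⁻¹ := (Commute.inv_left hx1w).eq
    calc g₀ * w = (g₀ * (x₁ : G)) * ((x₁ : G)⁻¹ * w) := by group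
      _ = (g₀ * (x₁ : G)) * (w * (x₁ : G)⁻¹) := by rw [hx1w']
      _ = (w * (g₀ * (x₁ : G))) * (x₁ : G)⁻¹ := by rw [← mul_assoc, hcomm.eq]
      _ = w * g₀ := by group
  let jfun : (D ⧸ F) → Fin m := fun q => (hcov (g₀ * ((q.out : D) : G))).choose
  have jspec : ∀ q : D ⧸ F, g₀ * ((q.out : D) : G) ∈ Subgroup.zpowers (c (jfun q)) :=
    fun q => (hcov _).choose_spec
  have hinj : Function.Injective jfun := by
    intro q1 q2 h
    have hmem := key q1.out q2.out (jfun q1) (jspec q1) (by rw [h]; exact jspec q2)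
    rw [← QuotientGroup.out_eq' q1, ← QuotientGroup.out_eq' q2, QuotientGroup.eq]
    exact hmem
  haveI : Finite (D ⧸ F) := Finite.of_injective jfun hinj
  have hcard : Nat.card (D ⧸ F) ≤ m := by
    have := Nat.card_le_card_of_injective jfun hinj
    simpa using this
  have hrel : (Subgroup.centralizer {g₀}).relIndex D = Nat.card (D ⧸ F) :=
    Subgroup.index_eq_card F
  refine ⟨by rw [hrel]; exact hcard, by rw [hrel]; exact Nat.card_pos.ne'⟩

private lemma natCardSigma {m : ℕ} (f : Fin m → Type*) [∀ i, Finite (f i)] :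
    Nat.card (Σ i, f i) = ∑ i, Nat.card (f i) := by
  classical
  haveI := fun i => Fintype.ofFinite (f i)
  simp [Nat.card_eq_fintype_card, Fintype.card_sigma]

theorem stmt_10 :
    ∃ f : ℕ → ℕ, ∀ (G : Type) [Group G] (m : ℕ) (C : Fin m → Subgroup G),
      (∀ i, IsCyclic (C i)) → (∀ g : G, ∃ i, g ∈ C i) →
      ∃ (Δ : Subgroup G) (hΔ : Δ.Normal), Finite Δ ∧ Nat.card Δ ≤ f m ∧
        (letI := hΔ; IsCyclic (G ⧸ Δ)) := by
  classical
  refine ⟨fun m => ((Finset.range ((m.factorial * m ^ m) ^ 2 + 1)).sup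
      Subgroup.cardCommutatorBound) * (m * m), ?_⟩
  intro G _ m C hcyc hcov'
  -- replace the cyclic subgroups by generators
  have hgen : ∀ i, ∃ c : G, C i ≤ Subgroup.zpowers c ∧ c ∈ C i := by
    intro i
    obtain ⟨g, hg⟩ := (hcyc i).exists_generator
    refine ⟨(g : G), ?_, g.2⟩
    intro x hx
    obtain ⟨k, hk⟩ := hg ⟨x, hx⟩
    exact ⟨k, by simpa using congrArg Subtype.val hk⟩
  choose c hc hcmem using hgen
  have hcov : ∀ g : G, ∃ i, g ∈ Subgroup.zpowers (c i) := by
    intro g; obtain ⟨i, hi⟩ := hcov' g; exact ⟨i, hc i hi⟩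
  -- Neumann : a cyclic subgroup of index ≤ m
  obtain ⟨i₀, hfin₀, hidx₀⟩ := neumann c hcov
  set Z₀ := Subgroup.zpowers (c i₀) with hZ₀
  set D := Z₀.normalCore with hD
  haveI : Z₀.FiniteIndex := hfin₀
  haveI : D.FiniteIndex := Subgroup.finiteIndex_normalCore Z₀
  -- index of D is at most m!
  have hDidx : D.index ≤ m.factorial := by
    have hker : D = (MulAction.toPermHom G (G ⧸ Z₀)).ker := Subgroup.normalCore_eq_ker Z₀
    haveI : Finite (G ⧸ Z₀) := Z₀.finite_quotient_of_finiteIndex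
    have := Subgroup.index_ker (MulAction.toPermHom G (G ⧸ Z₀))
    rw [hker, this]
    calc Nat.card (MulAction.toPermHom G (G ⧸ Z₀)).range
        ≤ Nat.card (Equiv.Perm (G ⧸ Z₀)) := Subgroup.card_le_card_group _
      _ = (Nat.card (G ⧸ Z₀)).factorial := by
          haveI := Fintype.ofFinite (G ⧸ Z₀)
          simp [Nat.card_eq_fintype_card, Fintype.card_perm]
      _ ≤ m.factorial := Nat.factorial_le (by
          rw [← Subgroup.index_eq_card]; exact hidx₀)
  -- D is abelian
  have hDab : ∀ x ∈ D, ∀ y ∈ D, x * y = y * x := by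
    intro x hx y hy
    obtain ⟨k1, hk1⟩ := Subgroup.mem_zpowers_iff.mp (Z₀.normalCore_le hx)
    obtain ⟨k2, hk2⟩ := Subgroup.mem_zpowers_iff.mp (Z₀.normalCore_le hy)
    rw [← hk1, ← hk2]
    exact ((Commute.refl (c i₀)).zpow_zpow k1 k2).eq
  -- E : a central subgroup of bounded index
  set E := D ⊓ (⨅ i, Subgroup.centralizer {c i}) with hE
  have hEcent : E ≤ Subgroup.center G := by
    intro x hx
    obtain ⟨hxD, hxC⟩ := hx
    refine Subgroup.mem_center_iff.mpr (fun g => ?_)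
    obtain ⟨i, hi⟩ := hcov g
    obtain ⟨k, hk⟩ := Subgroup.mem_zpowers_iff.mp hi
    have hxi : Commute (c i) x :=
      Subgroup.mem_centralizer_iff.mp (Subgroup.mem_iInf.mp hxC i) (c i) rfl
    rw [← hk]
    exact (hxi.zpow_left k).eq
  have hrel : ∀ i, (Subgroup.centralizer {c i}).relIndex D ≤ m ∧
      (Subgroup.centralizer {c i}).relIndex D ≠ 0 :=
    fun i => relindex_centralizer_le c hcov D hDab (c i)
  have hErel : E.relIndex D ≤ m ^ m := by
    rw [hE, inf_comm, Subgroup.inf_relIndex_right]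
    calc (⨅ i, Subgroup.centralizer {c i}).relIndex D
        ≤ ∏ i : Fin m, (Subgroup.centralizer {c i}).relIndex D :=
          Subgroup.relIndex_iInf_le _
      _ ≤ m ^ m := by
          have := Finset.prod_le_pow_card Finset.univ
            (fun i : Fin m => (Subgroup.centralizer {c i}).relIndex D) m
            (fun i _ => (hrel i).1)
          simpa using this
  have hErel0 : E.relIndex D ≠ 0 := by
    rw [hE, inf_comm, Subgroup.inf_relIndex_right]
    exact Subgroup.relIndex_iInf_ne_zero (fun i => (hrel i).2)
  have hED : E ≤ D := inf_le_left
  have hEidx : E.index ≤ m.factorial * m ^ m := by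
    rw [← Subgroup.relIndex_mul_index hED]
    calc E.relIndex D * D.index ≤ m ^ m * m.factorial :=
      Nat.mul_le_mul hErel (hDidx)
      _ = m.factorial * m ^ m := Nat.mul_comm _ _
  have hEidx0 : E.index ≠ 0 := by
    rw [← Subgroup.relIndex_mul_index hED]
    exact Nat.mul_ne_zero hErel0 Subgroup.FiniteIndex.index_ne_zero
  haveI hEfin : E.FiniteIndex := ⟨hEidx0⟩
  haveI hEnormal : E.Normal := by
    constructor
    intro x hx g
    have hgx := Subgroup.mem_center_iff.mp (hEcent hx) g
    have h1 : g * x * g⁻¹ = x := by rw [hgx, mul_inv_cancel_right]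
    rw [h1]
    exact hx
  -- the commutator set is finite of bounded size
  haveI : Finite (G ⧸ E) := E.finite_quotient_of_finiteIndex
  have hconj : ∀ a e x : G, e ∈ Subgroup.center G → (a * e) * x * (a * e)⁻¹ = a * x * a⁻¹ := by
    intro a e x he
    have hex : e * x = x * e := (Subgroup.mem_center_iff.mp he x).symm
    rw [mul_inv_rev]
    calc a * e * x * (e⁻¹ * a⁻¹) = a * (e * x) * e⁻¹ * a⁻¹ := by group
      _ = a * (x * e) * e⁻¹ * a⁻¹ := by rw [hex]
      _ = a * x * a⁻¹ := by group
  have hcommEq : ∀ a b e₁ e₂ : G, e₁ ∈ Subgroup.center G → e₂ ∈ Subgroup.center G →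
      ⁅a * e₁, b * e₂⁆ = ⁅a, b⁆ := by
    intro a b e₁ e₂ h1 h2
    rw [commutatorElement_def, commutatorElement_def]
    have step1 : (a * e₁) * (b * e₂) * (a * e₁)⁻¹ = a * (b * e₂) * a⁻¹ := hconj a e₁ _ h1
    rw [show (a * e₁) * (b * e₂) * (a * e₁)⁻¹ * (b * e₂)⁻¹
        = ((a * e₁) * (b * e₂) * (a * e₁)⁻¹) * (b * e₂)⁻¹ by group, step1]
    have he2 : ∀ y : G, e₂ * y = y * e₂ := fun y => (Subgroup.mem_center_iff.mp h2 y).symm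
    rw [mul_inv_rev]
    calc a * (b * e₂) * a⁻¹ * (e₂⁻¹ * b⁻¹)
        = a * b * (e₂ * a⁻¹) * e₂⁻¹ * b⁻¹ := by group
      _ = a * b * (a⁻¹ * e₂) * e₂⁻¹ * b⁻¹ := by rw [he2 a⁻¹]
      _ = a * b * a⁻¹ * b⁻¹ := by group
  set sfun : (G ⧸ E) × (G ⧸ E) → commutatorSet G := fun p =>
    ⟨⁅(p.1.out : G), p.2.out⁆, commutator_mem_commutatorSet _ _⟩ with hsfun
  have hssurj : Function.Surjective sfun := by
    rintro ⟨g, a, b, rfl⟩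
    refine ⟨(↑a, ↑b), ?_⟩
    have ha : a⁻¹ * (((a : G ⧸ E) : G ⧸ E).out : G) ∈ E := by
      rw [← QuotientGroup.eq]
      exact (QuotientGroup.out_eq' _).symm
    have hb : b⁻¹ * (((b : G ⧸ E) : G ⧸ E).out : G) ∈ E := by
      rw [← QuotientGroup.eq]
      exact (QuotientGroup.out_eq' _).symm
    apply Subtype.ext
    show ⁅((a : G ⧸ E)).out, ((b : G ⧸ E)).out⁆ = ⁅a, b⁆
    have ea : ((a : G ⧸ E)).out = a * (a⁻¹ * ((a : G ⧸ E)).out) := by group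
    have eb : ((b : G ⧸ E)).out = b * (b⁻¹ * ((b : G ⧸ E)).out) := by group
    rw [ea, eb]
    exact hcommEq a b _ _ (hEcent ha) (hEcent hb)
  haveI hcsFin : Finite (commutatorSet G) := Finite.of_surjective sfun hssurj
  have hcsCard : Nat.card (commutatorSet G) ≤ (m.factorial * m ^ m) ^ 2 := by
    calc Nat.card (commutatorSet G) ≤ Nat.card ((G ⧸ E) × (G ⧸ E)) :=
        Nat.card_le_card_of_surjective sfun hssurj
      _ = E.index * E.index := by
          rw [Nat.card_prod, ← Subgroup.index_eq_card]
      _ ≤ (m.factorial * m ^ m) ^ 2 := by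
          rw [pow_two]; exact Nat.mul_le_mul hEidx hEidx
  -- Schur bound on the commutator subgroup
  have hSchur : Nat.card (commutator G) ≤
      Subgroup.cardCommutatorBound (Nat.card (commutatorSet G)) :=
    Subgroup.card_commutator_le_of_finite_commutatorSet G
  set B := (Finset.range ((m.factorial * m ^ m) ^ 2 + 1)).sup Subgroup.cardCommutatorBound with hB
  have hSchurB : Nat.card (commutator G) ≤ B := by
    refine hSchur.trans ?_
    exact Finset.le_sup (Finset.mem_range.mpr (Nat.lt_succ_of_le hcsCard))
  -- abelianization
  set A := Abelianization G with hA
  set π : G →* A := Abelianization.of with hπ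
  have hπsurj : Function.Surjective π := by
    intro a
    exact QuotientGroup.induction_on a fun g => ⟨g, rfl⟩
  have hkerπ : π.ker = commutator G := by
    ext x
    exact QuotientGroup.eq_one_iff x
  set cbar : Fin m → A := fun i => π (c i) with hcbar
  have hcovA : ∀ a : A, ∃ i, a ∈ Subgroup.zpowers (cbar i) := by
    intro a
    obtain ⟨g, rfl⟩ := hπsurj a
    obtain ⟨i, hi⟩ := hcov g
    obtain ⟨k, hk⟩ := Subgroup.mem_zpowers_iff.mp hi
    exact ⟨i, ⟨k, by rw [← hk, map_zpow]⟩⟩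
  obtain ⟨i₂, hfin₂, hn₂⟩ := neumann cbar hcovA
  set Z₂ := Subgroup.zpowers (cbar i₂) with hZ₂
  set n := Z₂.index with hn
  haveI : Z₂.FiniteIndex := hfin₂
  have hnpos : n ≠ 0 := Subgroup.FiniteIndex.index_ne_zero
  set φ : A →* A := powMonoidHom n with hφ
  set T := φ.ker with hT
  -- A ⧸ T is cyclic
  haveI : IsCyclic Z₂ := zpowersIsCyclic _
  have hrange_le : φ.range ≤ Z₂ := by
    rintro _ ⟨x, rfl⟩
    show x ^ n ∈ Z₂
    rw [hn]
    exact Subgroup.pow_index_mem Z₂ x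
  haveI : IsCyclic φ.range := Subgroup.isCyclic_of_le hrange_le
  have hQTcyc : IsCyclic (A ⧸ T) := by
    have e1 := QuotientGroup.quotientKerEquivRange φ
    exact isCyclic_of_surjective e1.symm.toMonoidHom e1.symm.surjective
  -- T is finite of bounded size
  have hsubcyc : ∀ i : Fin m, IsCyclic (Subgroup.zpowers (cbar i) ⊓ T : Subgroup A) := by
    intro i
    haveI : IsCyclic (Subgroup.zpowers (cbar i)) := zpowersIsCyclic _
    exact Subgroup.isCyclic_of_le inf_le_left
  have hHcard : ∀ i : Fin m,
      Nat.card (Subgroup.zpowers (cbar i) ⊓ T : Subgroup A) ≤ n ∧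
      Finite (Subgroup.zpowers (cbar i) ⊓ T : Subgroup A) := by
    intro i
    obtain ⟨g, hg⟩ := (hsubcyc i).exists_generator
    have hg1 : ((g : A)) ^ n = 1 := by
      have : (g : A) ∈ T := g.2.2
      simpa [hφ, powMonoidHom_apply] using (MonoidHom.mem_ker.mp this)
    have hgn : g ^ n = 1 := Subtype.ext (by push_cast [hg1]; rfl)
    have hord : orderOf g ∣ n := orderOf_dvd_of_pow_eq_one hgn
    have hordpos : orderOf g ≠ 0 := by
      intro h0
      rw [h0] at hord
      exact hnpos (Nat.eq_zero_of_zero_dvd hord)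
    have hcardeq : orderOf g = Nat.card (Subgroup.zpowers (cbar i) ⊓ T : Subgroup A) :=
      orderOf_eq_card_of_forall_mem_zpowers hg
    constructor
    · rw [← hcardeq]; exact Nat.le_of_dvd (Nat.pos_of_ne_zero hnpos) hord
    · exact Nat.finite_of_card_ne_zero (by rw [← hcardeq]; exact hordpos)
  haveI : ∀ i : Fin m, Finite (Subgroup.zpowers (cbar i) ⊓ T : Subgroup A) :=
    fun i => (hHcard i).2
  set Ψ : T → Σ i : Fin m, (Subgroup.zpowers (cbar i) ⊓ T : Subgroup A) := fun x =>
    ⟨(hcovA x.1).choose, ⟨x.1, ⟨(hcovA x.1).choose_spec, x.2⟩⟩⟩ with hΨ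
  have hΨinj : Function.Injective Ψ := by
    intro x y h
    apply Subtype.ext
    exact congrArg
      (fun s : (Σ i : Fin m, (Subgroup.zpowers (cbar i) ⊓ T : Subgroup A)) => (s.2 : A)) h
  haveI hTfin : Finite T := Finite.of_injective Ψ hΨinj
  have hTcard : Nat.card T ≤ m * m := by
    calc Nat.card T ≤ Nat.card (Σ i : Fin m, (Subgroup.zpowers (cbar i) ⊓ T : Subgroup A)) :=
        Nat.card_le_card_of_injective Ψ hΨinj
      _ = ∑ i : Fin m, Nat.card (Subgroup.zpowers (cbar i) ⊓ T : Subgroup A) :=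
        natCardSigma _
      _ ≤ ∑ _i : Fin m, n := Finset.sum_le_sum (fun i _ => (hHcard i).1)
      _ = m * n := by simp [Finset.sum_const, Nat.smul_one_eq_cast]
      _ ≤ m * m := Nat.mul_le_mul_left m hn₂
  -- the subgroup Δ
  set q : A →* A ⧸ T := QuotientGroup.mk' T with hq
  set h : G →* A ⧸ T := q.comp π with hh
  set Δ := h.ker with hΔdef
  have hsurj : Function.Surjective h := by
    rw [hh]
    exact (QuotientGroup.mk'_surjective T).comp hπsurj
  haveI hΔnormal : Δ.Normal := MonoidHom.normal_ker h
  -- G ⧸ Δ is cyclic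
  have hGQcyc : IsCyclic (G ⧸ Δ) := by
    have e2 := QuotientGroup.quotientKerEquivOfSurjective h hsurj
    haveI := hQTcyc
    exact isCyclic_of_surjective e2.symm.toMonoidHom e2.symm.surjective
  -- Δ is finite of bounded cardinality
  have hmemT : ∀ x : Δ, π x.1 ∈ T := by
    intro x
    have hx1 : q (π x.1) = 1 := x.2
    exact (QuotientGroup.eq_one_iff (π x.1)).mp hx1
  set ψ : Δ →* T := (π.domRestrict Δ).codRestrict T (fun x => hmemT x) with hψ
  have hkerinj : Function.Injective
      (fun x : ψ.ker => (⟨x.1.1, by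
        have h2 : ψ x.1 = 1 := x.2
        have h1 : π x.1.1 = 1 := congrArg Subtype.val h2
        rw [← hkerπ]
        exact h1⟩ : commutator G)) := by
    intro x y hxy
    simp only [Subtype.mk.injEq] at hxy
    apply Subtype.ext
    exact Subtype.ext hxy
  haveI : Finite (commutator G) := by
    haveI := hcsFin
    infer_instance
  haveI hkerfin : Finite ψ.ker := Finite.of_injective _ hkerinj
  have hkercard : Nat.card ψ.ker ≤ Nat.card (commutator G) :=
    Nat.card_le_card_of_injective _ hkerinj
  haveI hquotfin : Finite (Δ ⧸ ψ.ker) := by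
    have e3 := QuotientGroup.quotientKerEquivRange ψ
    exact Finite.of_equiv _ e3.symm.toEquiv
  have hquotcard : Nat.card (Δ ⧸ ψ.ker) ≤ m * m := by
    have e3 := QuotientGroup.quotientKerEquivRange ψ
    rw [Nat.card_congr e3.toEquiv]
    exact (Subgroup.card_le_card_group ψ.range).trans hTcard
  haveI hΔfin : Finite Δ := by
    have e4 := Subgroup.groupEquivQuotientProdSubgroup (s := ψ.ker) (α := Δ)
    exact Finite.of_equiv _ e4.symm
  have hΔcard : Nat.card Δ ≤ B * (m * m) := by
    have e4 : Nat.card Δ = Nat.card (Δ ⧸ ψ.ker) * Nat.card ψ.ker :=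
      Subgroup.card_eq_card_quotient_mul_card_subgroup ψ.ker
    rw [e4]
    calc Nat.card (Δ ⧸ ψ.ker) * Nat.card ψ.ker ≤ (m * m) * B :=
        Nat.mul_le_mul hquotcard (hkercard.trans hSchurB)
      _ = B * (m * m) := Nat.mul_comm _ _
  exact ⟨Δ, hΔnormal, hΔfin, hΔcard, hGQcyc⟩
end

section
/- There is a function f : ℕ → ℕ such that every finite group G covered by m cyclic subgroups has a normal subgroup Δ with |Δ| ≤ f(m) and G/Δ cyclic. -/
open scoped commutatorElement

private lemma myNcardBiUnion {α ι : Type*} [Finite α] (s : Finset ι) (f : ι → Set α) :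
    (⋃ i ∈ s, f i).ncard ≤ ∑ i ∈ s, (f i).ncard := by
  classical
  induction s using Finset.induction_on with
  | empty => simp
  | insert _ _ h ih =>
      rw [Finset.set_biUnion_insert, Finset.sum_insert h]
      exact (Set.ncard_union_le _ _).trans (by omega)

private lemma myCommEq {G : Type*} [Group G] (a b z w : G) (hz : z ∈ Subgroup.center G)
    (hw : w ∈ Subgroup.center G) : ⁅a*z, b*w⁆ = ⁅a,b⁆ := by
  have hz' : ∀ g : G, g * z = z * g := Subgroup.mem_center_iff.mp hz
  have hw' : ∀ g : G, g * w = w * g := Subgroup.mem_center_iff.mp hw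
  have h1 : ∀ c : G, z * c * z⁻¹ = c := fun c => by rw [← hz' c, mul_inv_cancel_right]
  calc ⁅a*z, b*w⁆ = (a*z) * (b*w) * (a*z)⁻¹ * (b*w)⁻¹ := commutatorElement_def _ _
    _ = a * (z * (b*w) * z⁻¹) * a⁻¹ * (w⁻¹ * b⁻¹) := by rw [mul_inv_rev, mul_inv_rev]; group
    _ = a * (b*w) * a⁻¹ * (w⁻¹ * b⁻¹) := by rw [h1]
    _ = a * b * (w * (a⁻¹ * w⁻¹)) * b⁻¹ := by group
    _ = a * b * (a⁻¹ * w * w⁻¹) * b⁻¹ := by rw [← mul_assoc w, ← hw' a⁻¹]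
    _ = ⁅a, b⁆ := by rw [commutatorElement_def]; group

private lemma myCommSetCard (G : Type*) [Group G] [Finite G] :
    Nat.card (commutatorSet G) ≤ (Subgroup.center G).index ^ 2 := by
  set Z := Subgroup.center G
  have hF : Function.Surjective (fun p : (G ⧸ Z) × (G ⧸ Z) =>
      (⟨⁅p.1.out, p.2.out⁆, p.1.out, p.2.out, rfl⟩ : commutatorSet G)) := by
    rintro ⟨y, g₁, g₂, rfl⟩
    refine ⟨(QuotientGroup.mk g₁, QuotientGroup.mk g₂), ?_⟩
    obtain ⟨z, hz⟩ := QuotientGroup.mk_out_eq_mul Z g₁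
    obtain ⟨w, hw⟩ := QuotientGroup.mk_out_eq_mul Z g₂
    simp only [Subtype.ext_iff, hz, hw]
    exact myCommEq g₁ g₂ z w z.2 w.2
  calc Nat.card (commutatorSet G) ≤ Nat.card ((G ⧸ Z) × (G ⧸ Z)) :=
        Nat.card_le_card_of_surjective _ hF
    _ = Z.index ^ 2 := by rw [Nat.card_prod, sq]; rfl

private lemma myCenterIndexLe (G : Type*) [Group G] [Finite G] (m : ℕ) (hm : 0 < m)
    (C : Fin m → Subgroup G) (hcyc : ∀ i, IsCyclic (C i)) (hcov : ∀ g : G, ∃ i, g ∈ C i) :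
    (Subgroup.center G).index ≤ (2*m)^m := by
  classical
  set D : Fin m → Subgroup G := fun i => if (C i).index ≤ 2*m then C i else ⊤ with hD
  set Z₀ : Subgroup G := ⨅ i, D i with hZ₀
  have hle : Z₀ ≤ Subgroup.center G := by
    intro x hx
    have key : ∀ i, (C i).index ≤ 2*m → ∀ y ∈ C i, x * y = y * x := by
      intro i hi y hy
      have hxC : x ∈ C i := by
        have h := Subgroup.mem_iInf.mp hx i
        rwa [show D i = C i from if_pos hi] at h
      letI := (hcyc i).commGroup
      have : (⟨x, hxC⟩ * ⟨y, hy⟩ : C i) = ⟨y, hy⟩ * ⟨x, hxC⟩ := mul_comm _ _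
      simpa [Subtype.ext_iff] using this
    have hT : Subgroup.centralizer {x} = ⊤ := by
      by_contra hne
      set T := Subgroup.centralizer ({x} : Set G) with hTdef
      set n := Nat.card G with hn
      have hnpos : 0 < n := Nat.card_pos
      have h2T : 2 * Nat.card T ≤ n := by
        have h2 : 2 ≤ T.index := Subgroup.one_lt_index_of_ne_top hne
        calc 2 * Nat.card T ≤ T.index * Nat.card T := Nat.mul_le_mul_right _ h2
          _ = n := by rw [mul_comm]; exact Subgroup.card_mul_index T
      set bigs : Finset (Fin m) := Finset.univ.filter (fun i => ¬((C i).index ≤ 2*m)) with hbigs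
      have hbig : ∀ i ∈ bigs, (2*m+1) * Nat.card (C i) ≤ n := by
        intro i hi
        have h2 : 2*m+1 ≤ (C i).index := by
          have := (Finset.mem_filter.mp hi).2
          omega
        calc (2*m+1) * Nat.card (C i) ≤ (C i).index * Nat.card (C i) :=
              Nat.mul_le_mul_right _ h2
          _ = n := by rw [mul_comm]; exact Subgroup.card_mul_index (C i)
      have hcover : (Set.univ : Set G) ⊆ (T : Set G) ∪ ⋃ i ∈ bigs, ((C i : Subgroup G) : Set G) := by
        intro g _
        obtain ⟨i, hg⟩ := hcov g
        by_cases hsmall : (C i).index ≤ 2*m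
        · left
          rw [SetLike.mem_coe, Subgroup.mem_centralizer_iff]
          rintro h hh
          rw [Set.mem_singleton_iff] at hh
          subst hh
          exact key i hsmall g hg
        · right
          exact Set.mem_biUnion (Finset.mem_filter.mpr ⟨Finset.mem_univ i, hsmall⟩) hg
      have hmain : n ≤ Nat.card T + ∑ i ∈ bigs, Nat.card (C i) := by
        calc n = (Set.univ : Set G).ncard := (Set.ncard_univ G).symm
          _ ≤ ((T : Set G) ∪ ⋃ i ∈ bigs, ((C i : Subgroup G) : Set G)).ncard :=
              Set.ncard_le_ncard hcover (Set.toFinite _)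
          _ ≤ (T : Set G).ncard + (⋃ i ∈ bigs, ((C i : Subgroup G) : Set G)).ncard :=
              Set.ncard_union_le _ _
          _ ≤ (T : Set G).ncard + ∑ i ∈ bigs, ((C i : Subgroup G) : Set G).ncard := by
              have := myNcardBiUnion bigs (fun i => ((C i : Subgroup G) : Set G))
              omega
          _ = Nat.card T + ∑ i ∈ bigs, Nat.card (C i) := by
              simp [← Nat.card_coe_set_eq]
      have hsum : (2*m+1) * (∑ i ∈ bigs, Nat.card (C i)) ≤ m * n := by
        rw [Finset.mul_sum]
        calc ∑ i ∈ bigs, (2*m+1) * Nat.card (C i) ≤ ∑ _i ∈ bigs, n :=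
              Finset.sum_le_sum hbig
          _ = bigs.card * n := by rw [Finset.sum_const, smul_eq_mul]
          _ ≤ m * n := Nat.mul_le_mul_right _ ((Finset.card_filter_le _ _).trans (by simp))
      nlinarith [hmain, h2T, hsum, hnpos]
    rw [Subgroup.mem_center_iff]
    intro g
    have hg : g ∈ Subgroup.centralizer ({x} : Set G) := hT ▸ Subgroup.mem_top g
    exact (Subgroup.mem_centralizer_iff.mp hg x (Set.mem_singleton x)).symm
  calc (Subgroup.center G).index ≤ Z₀.index :=
        Nat.le_of_dvd (Nat.pos_of_ne_zero (Subgroup.index_ne_zero_of_finite))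
          (Subgroup.index_dvd_of_le hle)
    _ ≤ ∏ _i : Fin m, (2*m) := by
        refine (Subgroup.index_iInf_le D).trans (Finset.prod_le_prod' ?_)
        intro i _
        by_cases hsmall : (C i).index ≤ 2*m
        · rw [show D i = C i from if_pos hsmall]; exact hsmall
        · rw [show D i = ⊤ from if_neg hsmall, Subgroup.index_top]; omega
    _ = (2*m)^m := by rw [Finset.prod_const]; simp

private lemma myBoundMono {a b : ℕ} (ha : 1 ≤ a) (hab : a ≤ b) :
    Subgroup.cardCommutatorBound a ≤ Subgroup.cardCommutatorBound b := by
  have hb : 1 ≤ b := ha.trans hab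
  unfold Subgroup.cardCommutatorBound
  have h1 : a ^ (2*a) ≤ b ^ (2*b) :=
    (Nat.pow_le_pow_left hab _).trans (Nat.pow_le_pow_right hb (by omega))
  have h2 : a ^ (2*a+1) ≤ b ^ (2*b+1) :=
    (Nat.pow_le_pow_left hab _).trans (Nat.pow_le_pow_right hb (by omega))
  exact (Nat.pow_le_pow_left h1 _).trans
    (Nat.pow_le_pow_right (Nat.one_le_pow _ _ hb) (by omega))

private lemma myExistsSmallIndex {A : Type*} [Group A] [Finite A] {m : ℕ}
    (C : Fin m → Subgroup A) (hcov : ∀ a : A, ∃ i, a ∈ C i) : ∃ j, (C j).index ≤ m := by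
  by_contra hno
  push_neg at hno
  set n := Nat.card A with hn
  have hnpos : 0 < n := Nat.card_pos
  have hcard : ∀ j, (m+1) * Nat.card (C j) ≤ n := fun j => by
    calc (m+1) * Nat.card (C j) ≤ (C j).index * Nat.card (C j) :=
          Nat.mul_le_mul_right _ (hno j)
      _ = n := by rw [mul_comm]; exact Subgroup.card_mul_index (C j)
  have hcover : (Set.univ : Set A) ⊆
      ⋃ i ∈ (Finset.univ : Finset (Fin m)), ((C i : Subgroup A) : Set A) := by
    intro a _
    obtain ⟨i, hi⟩ := hcov a
    exact Set.mem_biUnion (Finset.mem_univ i) hi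
  have hmain : n ≤ ∑ i : Fin m, Nat.card (C i) := by
    calc n = (Set.univ : Set A).ncard := (Set.ncard_univ A).symm
      _ ≤ (⋃ i ∈ (Finset.univ : Finset (Fin m)), ((C i : Subgroup A) : Set A)).ncard :=
          Set.ncard_le_ncard hcover (Set.toFinite _)
      _ ≤ ∑ i : Fin m, ((C i : Subgroup A) : Set A).ncard := myNcardBiUnion _ _
      _ = ∑ i : Fin m, Nat.card (C i) := by simp [← Nat.card_coe_set_eq]
  have hfin : (m+1) * n ≤ m * n := by
    calc (m+1) * n ≤ (m+1) * ∑ i : Fin m, Nat.card (C i) := Nat.mul_le_mul_left _ hmain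
      _ = ∑ i : Fin m, (m+1) * Nat.card (C i) := Finset.mul_sum _ _ _
      _ ≤ ∑ _i : Fin m, n := Finset.sum_le_sum (fun i _ => hcard i)
      _ = m * n := by simp [Finset.sum_const, Finset.card_univ, mul_comm]
  nlinarith [hfin, hnpos]

theorem stmt_11 :
    ∃ f : ℕ → ℕ, ∀ (G : Type) [Group G] [Finite G] (m : ℕ) (C : Fin m → Subgroup G),
      (∀ i, IsCyclic (C i)) → (∀ g : G, ∃ i, g ∈ C i) →
      ∃ (Δ : Subgroup G) (hΔ : Δ.Normal), Nat.card Δ ≤ f m ∧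
        (letI := hΔ; IsCyclic (G ⧸ Δ)) := by
  refine ⟨fun m => (m * Nat.factorial m) * Subgroup.cardCommutatorBound (((2*m)^m)^2), ?_⟩
  intro G _ _ m C hcyc hcov
  obtain ⟨i₀, -⟩ := hcov 1
  have hm : 0 < m := i₀.pos
  set q := Nat.factorial m with hq
  have hqpos : 0 < q := Nat.factorial_pos m
  -- the abelianization
  set π : G →* Abelianization G := Abelianization.of with hπ
  have hπsurj : Function.Surjective π := fun a => by
    obtain ⟨g, hg⟩ := Quot.exists_rep a
    exact ⟨g, hg⟩
  have hkerπ : π.ker = commutator G := by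
    ext x
    rw [MonoidHom.mem_ker]
    exact QuotientGroup.eq_one_iff x
  -- the images of the cyclic subgroups cover the abelianization
  set Cb : Fin m → Subgroup (Abelianization G) := fun i => (C i).map π with hCb
  have hcycb : ∀ i, IsCyclic (Cb i) := fun i => by
    haveI := hcyc i
    exact isCyclic_of_surjective _ (π.subgroupMap_surjective (C i))
  have hcovb : ∀ a : Abelianization G, ∃ i, a ∈ Cb i := by
    intro a
    obtain ⟨g, rfl⟩ := hπsurj a
    obtain ⟨i, hg⟩ := hcov g
    exact ⟨i, Subgroup.mem_map_of_mem π hg⟩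
  obtain ⟨j, hj⟩ := myExistsSmallIndex Cb hcovb
  haveI : IsCyclic (Cb j) := hcycb j
  -- the key homomorphism
  set ψ : G →* Abelianization G := (powMonoidHom q).comp π with hψ
  have hψval : ∀ g : G, ψ g = (π g) ^ q := fun g => rfl
  have hrange : ψ.range ≤ Cb j := by
    rintro - ⟨g, rfl⟩
    rw [hψval]
    rw [← QuotientGroup.eq_one_iff ((π g) ^ q)]
    rw [QuotientGroup.mk_pow]
    have hdvd : Nat.card (Abelianization G ⧸ Cb j) ∣ q := by
      rw [← Subgroup.index_eq_card]
      exact Nat.dvd_factorial (Nat.pos_of_ne_zero Subgroup.index_ne_zero_of_finite) hj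
    exact orderOf_dvd_iff_pow_eq_one.mp ((orderOf_dvd_natCard _).trans hdvd)
  refine ⟨ψ.ker, MonoidHom.normal_ker ψ, ?_, ?_⟩
  · -- cardinality bound
    have hπker : π.ker ≤ ψ.ker := by
      intro x hx
      rw [MonoidHom.mem_ker] at hx ⊢
      rw [hψval, hx, one_pow]
    -- split the cardinality
    have hsplit : Nat.card ψ.ker =
        Nat.card (ψ.ker ⧸ (π.ker.subgroupOf ψ.ker)) * Nat.card (π.ker.subgroupOf ψ.ker) :=
      Subgroup.card_eq_card_quotient_mul_card_subgroup _
    -- second factor: bounded via Schur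
    have hc2 : Nat.card (π.ker.subgroupOf ψ.ker) ≤
        Subgroup.cardCommutatorBound (((2*m)^m)^2) := by
      have he : Nat.card (π.ker.subgroupOf ψ.ker) = Nat.card π.ker :=
        Nat.card_congr (Subgroup.subgroupOfEquivOfLe hπker).toEquiv
      rw [he, hkerπ]
      calc Nat.card (commutator G) ≤
            Subgroup.cardCommutatorBound (Nat.card (commutatorSet G)) :=
            Subgroup.card_commutator_le_of_finite_commutatorSet G
        _ ≤ Subgroup.cardCommutatorBound (((2*m)^m)^2) := by
            apply myBoundMono Nat.card_pos
            calc Nat.card (commutatorSet G) ≤ (Subgroup.center G).index ^ 2 :=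
                  myCommSetCard G
              _ ≤ ((2*m)^m) ^ 2 :=
                  Nat.pow_le_pow_left (myCenterIndexLe G m hm C hcyc hcov) 2
    -- first factor: the quotient embeds in the image of ψ.ker in the abelianization
    have hc1 : Nat.card (ψ.ker ⧸ (π.ker.subgroupOf ψ.ker)) ≤ m * q := by
      -- identify the quotient with the image of ψ.ker under π
      set π' : ψ.ker →* Abelianization G := π.comp ψ.ker.subtype with hπ'
      have hkerπ' : π'.ker = π.ker.subgroupOf ψ.ker := rfl
      have he : Nat.card (ψ.ker ⧸ (π.ker.subgroupOf ψ.ker)) = Nat.card π'.range := by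
        rw [← hkerπ']
        exact Nat.card_congr (QuotientGroup.quotientKerEquivRange π').toEquiv
      rw [he]
      -- π'.range is contained in B, the kernel of the q-th power map
      set B : Subgroup (Abelianization G) := (powMonoidHom q :
        Abelianization G →* Abelianization G).ker with hB
      have hrB : π'.range ≤ B := by
        rintro - ⟨x, rfl⟩
        have hx : ψ (x : G) = 1 := x.2
        rw [hψval] at hx
        exact hx
      have h1 : Nat.card π'.range ≤ Nat.card B := Subgroup.card_le_of_le hrB
      -- bound the cardinality of B
      have hsplitB : Nat.card B =
          Nat.card (B ⧸ ((Cb j).subgroupOf B)) * Nat.card ((Cb j).subgroupOf B) :=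
        Subgroup.card_eq_card_quotient_mul_card_subgroup _
      have hq1 : Nat.card (B ⧸ ((Cb j).subgroupOf B)) ≤ m := by
        rw [← Subgroup.index_eq_card]
        have : (Cb j).relIndex B ∣ (Cb j).index :=
          Subgroup.relIndex_dvd_index_of_normal (Cb j) B
        exact le_trans (Nat.le_of_dvd
          (Nat.pos_of_ne_zero Subgroup.index_ne_zero_of_finite) this) hj
      have hq2 : Nat.card ((Cb j).subgroupOf B) ≤ q := by
        have hPe : Nat.card ((Cb j).subgroupOf B) = Nat.card ((Cb j ⊓ B :
            Subgroup (Abelianization G))) := by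
          rw [← Subgroup.inf_subgroupOf_right]
          exact Nat.card_congr (Subgroup.subgroupOfEquivOfLe inf_le_right).toEquiv
        rw [hPe]
        haveI : IsCyclic ((Cb j ⊓ B : Subgroup (Abelianization G))) :=
          Subgroup.isCyclic_of_le inf_le_left
        obtain ⟨g, hg⟩ := IsCyclic.exists_generator
          (α := (Cb j ⊓ B : Subgroup (Abelianization G)))
        have hord : orderOf g = Nat.card ((Cb j ⊓ B : Subgroup (Abelianization G))) :=
          orderOf_eq_card_of_forall_mem_zpowers hg
        have hgq : g ^ q = 1 := by
          have : ((g : Abelianization G)) ^ q = 1 := g.2.2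
          ext
          simpa using this
        rw [← hord]
        exact Nat.le_of_dvd hqpos (orderOf_dvd_of_pow_eq_one hgq)
      calc Nat.card π'.range ≤ Nat.card B := h1
        _ = Nat.card (B ⧸ ((Cb j).subgroupOf B)) * Nat.card ((Cb j).subgroupOf B) := hsplitB
        _ ≤ m * q := Nat.mul_le_mul hq1 hq2
    calc Nat.card ψ.ker = Nat.card (ψ.ker ⧸ (π.ker.subgroupOf ψ.ker)) *
          Nat.card (π.ker.subgroupOf ψ.ker) := hsplit
      _ ≤ (m * q) * Subgroup.cardCommutatorBound (((2*m)^m)^2) := Nat.mul_le_mul hc1 hc2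
  · -- cyclicity of the quotient
    haveI : IsCyclic ψ.range := Subgroup.isCyclic_of_le hrange
    exact isCyclic_of_surjective (QuotientGroup.quotientKerEquivRange ψ).symm
      (QuotientGroup.quotientKerEquivRange ψ).symm.surjective
end

section
/- Let A and G be finite groups with gcd(|G|,|A|) = 1 and suppose A acts on G. If G is an abelian p-group, then G = C_G(A) × [G,A]. -/
theorem stmt_13 (p : ℕ) [Fact p.Prime] (A G : Type*) [Group A] [Finite A]
    [CommGroup G] [Finite G] [MulDistribMulAction A G]
    (hG : IsPGroup p G) (hcop : (Nat.card G).Coprime (Nat.card A)) :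
    IsCompl (FixedPoints.subgroup A G)
      (Subgroup.closure {x : G | ∃ (g : G) (a : A), x = g⁻¹ * a • g}) := by
  classical
  have := Fintype.ofFinite A
  set C := FixedPoints.subgroup A G with hC
  set K := Subgroup.closure {x : G | ∃ (g : G) (a : A), x = g⁻¹ * a • g} with hK
  set n := Nat.card A with hn
  -- find an inverse of n modulo the exponent of G
  obtain ⟨m, hm⟩ : ∃ m : ℕ, ∀ g : G, g ^ (n * m) = g := by
    rcases Nat.lt_or_ge 1 (Nat.card G) with h | h
    · obtain ⟨m, -, hm'⟩ := Nat.exists_mul_mod_eq_one_of_coprime hcop.symm h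
      refine ⟨m, fun g => ?_⟩
      calc g ^ (n * m)
          = g ^ (Nat.card G * (n * m / Nat.card G) + n * m % Nat.card G) := by
            rw [Nat.div_add_mod]
        _ = g := by
            rw [hm', pow_add, pow_mul, pow_card_eq_one', one_pow, pow_one, one_mul]
    · have h1 : Nat.card G = 1 := le_antisymm h Nat.card_pos
      have : Subsingleton G := (Nat.card_eq_one_iff_unique.mp h1).1
      exact ⟨1, fun g => Subsingleton.elim _ _⟩
  -- the norm map
  set N : G → G := fun g => ∏ a : A, a • g with hNdef
  have Nfix : ∀ g : G, N g ∈ C := by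
    intro g a
    show a • N g = N g
    have h1 : a • N g = ∏ b : A, a • (b • g) :=
      map_prod (MulDistribMulAction.toMonoidHom G a) (fun b => b • g) Finset.univ
    rw [h1]
    calc ∏ b : A, a • b • g = ∏ b : A, (a * b) • g := by simp [mul_smul]
      _ = N g := Equiv.prod_comp (Equiv.mulLeft a) (fun b : A => b • g)
  have Nsmul : ∀ (a : A) (g : G), N (a • g) = N g := by
    intro a g
    calc N (a • g) = ∏ b : A, (b * a) • g := by simp [hNdef, mul_smul]
      _ = N g := Equiv.prod_comp (Equiv.mulRight a) (fun b : A => b • g)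
  have NC : ∀ g ∈ C, N g = g ^ n := by
    intro g hg
    have : ∀ a : A, a • g = g := hg
    simp [hNdef, this, hn, Nat.card_eq_fintype_card]
  -- the projection onto C
  set π : G →* G :=
    { toFun := fun g => (N g) ^ m
      map_one' := by simp [hNdef]
      map_mul' := by
        intro x y
        simp [hNdef, smul_mul', Finset.prod_mul_distrib, mul_pow] } with hπ
  have πC : ∀ g : G, π g ∈ C := fun g => pow_mem (Nfix g) m
  have πfix : ∀ g ∈ C, π g = g := by
    intro g hg
    show (N g) ^ m = g
    rw [NC g hg, ← pow_mul, hm]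
  have πsmul : ∀ (a : A) (g : G), π (a • g) = π g := by
    intro a g
    show (N (a • g)) ^ m = (N g) ^ m
    rw [Nsmul]
  -- K is the kernel of π
  have KleKer : K ≤ π.ker := by
    rw [hK, Subgroup.closure_le]
    rintro x ⟨g, a, rfl⟩
    simp only [SetLike.mem_coe, MonoidHom.mem_ker, map_mul, map_inv, πsmul a g,
      inv_mul_cancel]
  have kerLeK : ∀ g : G, π g = 1 → g ∈ K := by
    intro g hg
    have hNg : N g = 1 := by
      have h1 : (N g) ^ (n * m) = N g := hm (N g)
      rw [mul_comm, pow_mul] at h1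
      have : (N g) ^ m = 1 := hg
      rw [this, one_pow] at h1
      exact h1.symm
    have hprod : g ^ n * (N g)⁻¹ ∈ K := by
      have he : g ^ n * (N g)⁻¹ = ∏ a : A, (g * (a • g)⁻¹) := by
        rw [Finset.prod_mul_distrib, Finset.prod_inv_distrib, Finset.prod_const,
          Finset.card_univ, hNdef, hn, Nat.card_eq_fintype_card]
      rw [he]
      refine Subgroup.prod_mem _ fun a _ => ?_
      have : g * (a • g)⁻¹ = (g⁻¹ * a • g)⁻¹ := by
        rw [mul_inv_rev, inv_inv, mul_comm]
      rw [this]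
      exact inv_mem (Subgroup.subset_closure ⟨g, a, rfl⟩)
    have hgn : g ^ n ∈ K := by simpa [hNg] using hprod
    have : g = (g ^ n) ^ m := by rw [← pow_mul, hm]
    rw [this]
    exact pow_mem hgn m
  constructor
  · rw [Subgroup.disjoint_def]
    intro x hxC hxK
    have h1 : π x = 1 := KleKer hxK
    rw [πfix x hxC] at h1
    exact h1
  · rw [codisjoint_iff_le_sup]
    intro g _
    have hdec : g = π g * ((π g)⁻¹ * g) := by group
    rw [hdec]
    refine Subgroup.mul_mem_sup (πC g) (kerLeK _ ?_)
    rw [map_mul, map_inv, πfix (π g) (πC g), inv_mul_cancel]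
end

section
/- Let G be a finite group acting by automorphisms on a finite group H with gcd(|G|,|H|) = 1 (coprime action). Then [H,G,G] = [H,G]. -/
section Aux

variable {G H : Type*} [Group G] [Group H] [MulDistribMulAction G H]

/-- The set of `σ : G` such that all "commutators" `k⁻¹ * σ • k` lie in `K` is a subgroup. -/
private def goodSubgroup (K : Subgroup H) : Subgroup G where
  carrier := {σ : G | ∀ k : H, k⁻¹ * σ • k ∈ K}
  one_mem' := by
    intro k
    simpa using K.one_mem
  mul_mem' := by
    intro a b ha hb k
    have key : k⁻¹ * (a * b) • k = (k⁻¹ * b • k) * ((b • k)⁻¹ * a • (b • k)) := by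
      rw [mul_smul]
      group
    rw [key]
    exact K.mul_mem (hb k) (ha (b • k))
  inv_mem' := by
    intro a ha k
    have key : k⁻¹ * a⁻¹ • k = ((a⁻¹ • k)⁻¹ * a • (a⁻¹ • k))⁻¹ := by
      rw [smul_inv_smul]
      group
    rw [key]
    exact K.inv_mem (ha (a⁻¹ • k))

private lemma mem_goodSubgroup_iff (K : Subgroup H) (σ : G) :
    σ ∈ goodSubgroup (G := G) K ↔ ∀ k : H, k⁻¹ * σ • k ∈ K := Iff.rfl

/-- Stability of a closure under the action, given stability of the generating set. -/
private lemma smul_mem_closure {S : Set H} (hS : ∀ (σ : G), ∀ x ∈ S, σ • x ∈ S)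
    (σ : G) {x : H} (hx : x ∈ Subgroup.closure S) : σ • x ∈ Subgroup.closure S := by
  induction hx using Subgroup.closure_induction with
  | mem y hy => exact Subgroup.subset_closure (hS σ y hy)
  | one => rw [smul_one]; exact Subgroup.one_mem _
  | mul a b _ _ ha hb => rw [smul_mul']; exact Subgroup.mul_mem _ ha hb
  | inv a _ ha => rw [smul_inv']; exact Subgroup.inv_mem _ ha

/-- p-group fixed point argument: a fixed point in the coset `h * K`. -/
private lemma exists_fixed [Finite H] {p : ℕ} (hp : p.Prime) (g : G) {a : ℕ}
    (hord : orderOf g = p ^ a) (K : Subgroup H)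
    (hstab : ∀ (σ : G), ∀ x ∈ K, σ • x ∈ K)
    (hgen : ∀ k : H, k⁻¹ * g • k ∈ K)
    (hcard : ¬ p ∣ Nat.card K) (h : H) :
    ∃ y : H, h⁻¹ * y ∈ K ∧ g • y = y := by
  haveI : Fact p.Prime := ⟨hp⟩
  have hzp : ∀ σ ∈ Subgroup.zpowers g, ∀ k : H, k⁻¹ * σ • k ∈ K := by
    intro σ hσ
    have hle : Subgroup.zpowers g ≤ goodSubgroup (G := G) K :=
      Subgroup.zpowers_le.mpr hgen
    exact hle hσ
  set P := Subgroup.zpowers g with hP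
  have hPp : IsPGroup p P := IsPGroup.of_card (by rw [Nat.card_zpowers, hord])
  let α := {y : H // h⁻¹ * y ∈ K}
  letI : SMul P α := ⟨fun σ y => ⟨(σ : G) • (y : H), by
    have key : h⁻¹ * (σ : G) • (y : H) = (h⁻¹ * (σ : G) • h) * ((σ : G) • (h⁻¹ * (y : H))) := by
      rw [smul_mul', smul_inv']
      group
    rw [key]
    exact K.mul_mem (hzp σ σ.2 h) (hstab σ _ y.2)⟩⟩
  letI : MulAction P α :=
    { one_smul := fun y => Subtype.ext (by
        show ((1 : P) : G) • (y : H) = (y : H)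
        rw [OneMemClass.coe_one, one_smul])
      mul_smul := fun σ τ y => Subtype.ext (by
        show ((σ * τ : P) : G) • (y : H) = (σ : G) • ((τ : G) • (y : H))
        rw [Subgroup.coe_mul, mul_smul]) }
  have hcardα : ¬ p ∣ Nat.card α := by
    have hcongr : Nat.card α = Nat.card K := by
      refine Nat.card_congr ⟨fun y => ⟨h⁻¹ * (y : H), y.2⟩, fun x => ⟨h * (x : H), by
        simp [inv_mul_cancel_left]⟩, ?_, ?_⟩
      · intro y; exact Subtype.ext (by simp)
      · intro x; exact Subtype.ext (by simp)
    rwa [hcongr]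
  obtain ⟨y, hy⟩ := hPp.nonempty_fixed_point_of_prime_not_dvd_card α hcardα
  refine ⟨(y : H), y.2, ?_⟩
  have := hy ⟨g, Subgroup.mem_zpowers g⟩
  exact congrArg Subtype.val this

end Aux

theorem stmt_15 (G H : Type*) [Group G] [Finite G] [Group H] [Finite H]
    [MulDistribMulAction G H] (hcop : (Nat.card G).Coprime (Nat.card H)) :
    Subgroup.closure {x : H | ∃ h ∈ Subgroup.closure {y : H | ∃ (k : H) (g : G), y = k⁻¹ * g • k},
        ∃ g : G, x = h⁻¹ * g • h} =
      Subgroup.closure {y : H | ∃ (k : H) (g : G), y = k⁻¹ * g • k} := by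
  set S : Set H := {y : H | ∃ (k : H) (g : G), y = k⁻¹ * g • k} with hS
  set K : Subgroup H := Subgroup.closure S with hK
  set T : Subgroup H := Subgroup.closure {x : H | ∃ h ∈ K, ∃ g : G, x = h⁻¹ * g • h} with hT
  -- generator stability
  have hSstab : ∀ (σ : G), ∀ x ∈ S, σ • x ∈ S := by
    rintro σ x ⟨k, g, rfl⟩
    refine ⟨σ • k, σ * g * σ⁻¹, ?_⟩
    rw [smul_mul', smul_inv']
    congr 1
    rw [mul_smul, mul_smul, inv_smul_smul]
  have hKstab : ∀ (σ : G), ∀ x ∈ K, σ • x ∈ K := fun σ x hx => smul_mem_closure hSstab σ hx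
  have hTstab : ∀ (σ : G), ∀ x ∈ T, σ • x ∈ T := by
    intro σ x hx
    refine smul_mem_closure ?_ σ hx
    rintro τ y ⟨m, hm, g, rfl⟩
    refine ⟨τ • m, hKstab τ m hm, τ * g * τ⁻¹, ?_⟩
    rw [smul_mul', smul_inv']
    congr 1
    rw [mul_smul, mul_smul, inv_smul_smul]
  have hcardK : ∀ q : ℕ, q.Prime → q ∣ Nat.card G → ¬ q ∣ Nat.card K := by
    intro q hq hqG hqK
    have h1 : q ∣ Nat.card H := hqK.trans (Subgroup.card_subgroup_dvd_card K)
    have : q ∣ Nat.gcd (Nat.card G) (Nat.card H) := Nat.dvd_gcd hqG h1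
    rw [hcop] at this
    exact hq.one_lt.ne' (Nat.dvd_one.mp this)
  -- main induction: every commutator lands in T
  have main : ∀ n : ℕ, ∀ g : G, orderOf g = n → ∀ k : H, k⁻¹ * g • k ∈ T := by
    intro n
    induction n using Nat.strong_induction_on with
    | _ n ih =>
      intro g hg k
      rcases eq_or_ne n 1 with h1 | h1
      · have : g = 1 := orderOf_eq_one_iff.mp (hg.trans h1)
        subst this
        simpa using T.one_mem
      have hn0 : n ≠ 0 := by
        have := orderOf_pos g
        omega
      set p := n.minFac with hpdef
      have hp : p.Prime := Nat.minFac_prime h1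
      set a := n.factorization p with hadef
      set m := n / p ^ a with hmdef
      have hpa_dvd : p ^ a ∣ n := Nat.ordProj_dvd n p
      have hmul : p ^ a * m = n := Nat.ordProj_mul_ordCompl_eq_self n p
      have hpa_pos : 1 < p ^ a := by
        have hap : 0 < a := by
          rw [hadef]
          exact (Nat.Prime.factorization_pos_of_dvd hp hn0 (Nat.minFac_dvd n))
        calc 1 < p := hp.one_lt
        _ ≤ p ^ a := Nat.le_self_pow hap.ne' p
      by_cases hm1 : m = 1
      · -- prime power case
        have hord : orderOf g = p ^ a := by
          rw [hg, ← hmul, hm1, mul_one]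
        have hpG : p ∣ Nat.card G := by
          have h2 : p ∣ n := Nat.minFac_dvd n
          have h3 : n ∣ Nat.card G := hg ▸ orderOf_dvd_natCard g
          exact h2.trans h3
        obtain ⟨y, hy, hfix⟩ := exists_fixed hp g hord K hKstab
          (fun k' => Subgroup.subset_closure ⟨k', g, rfl⟩) (hcardK p hp hpG) k
        have key : k⁻¹ * g • k = ((k⁻¹ * y)⁻¹)⁻¹ * g • (k⁻¹ * y)⁻¹ := by
          rw [smul_inv', smul_mul', smul_inv', hfix]
          group
        rw [key]
        exact Subgroup.subset_closure ⟨(k⁻¹ * y)⁻¹, K.inv_mem hy, g, rfl⟩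
      · -- composite case: split into primary parts
        have hm0 : m ≠ 0 := by
          intro h0
          rw [h0, mul_zero] at hmul
          exact hn0 hmul.symm
        have hm2 : 1 < m := Nat.lt_of_le_of_ne (Nat.one_le_iff_ne_zero.mpr hm0) (Ne.symm hm1)
        have hm_lt : m < n := by nlinarith
        have hpa_lt : p ^ a < n := by nlinarith
        have h2 : orderOf (g ^ (p ^ a)) = m := by
          rw [orderOf_pow, hg, Nat.gcd_eq_right hpa_dvd]
        have h3 : orderOf (g ^ m) = p ^ a := by
          have hmdvd : m ∣ n := ⟨p ^ a, by rw [← hmul]; ring⟩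
          rw [orderOf_pow, hg, Nat.gcd_eq_right hmdvd,
            Nat.div_eq_of_eq_mul_left (Nat.pos_of_ne_zero hm0) hmul.symm]
        have hU1 : g ^ (p ^ a) ∈ goodSubgroup (G := G) T := fun k' => ih m hm_lt _ h2 k'
        have hU2 : g ^ m ∈ goodSubgroup (G := G) T := fun k' => ih (p ^ a) hpa_lt _ h3 k'
        have hcop2 : Nat.Coprime (p ^ a) m :=
          Nat.Coprime.pow_left a (Nat.coprime_ordCompl hp hn0)
        obtain ⟨u, v, huv⟩ : IsCoprime (p ^ a : ℤ) (m : ℤ) := by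
          rw [Int.isCoprime_iff_gcd_eq_one]
          exact_mod_cast hcop2
        have hgdecomp : g = (g ^ (p ^ a)) ^ u * (g ^ m) ^ v := by
          rw [← zpow_natCast g (p ^ a), ← zpow_natCast g m, ← zpow_mul, ← zpow_mul, ← zpow_add]
          have : ((p ^ a : ℕ) : ℤ) * u + ((m : ℕ) : ℤ) * v = 1 := by push_cast; linarith [huv]
          rw [this, zpow_one]
        have : g ∈ goodSubgroup (G := G) T := by
          rw [hgdecomp]
          exact Subgroup.mul_mem _ (Subgroup.zpow_mem _ hU1 u) (Subgroup.zpow_mem _ hU2 v)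
        exact this k
  apply le_antisymm
  · rw [Subgroup.closure_le]
    rintro x ⟨h, hh, g, rfl⟩
    exact Subgroup.subset_closure ⟨h, g, rfl⟩
  · rw [hK, Subgroup.closure_le]
    rintro x ⟨k, g, rfl⟩
    exact main (orderOf g) g rfl k
end

section
/- Let G be a finite group in which every nontrivial element x generates a cyclic subgroup having at most m conjugates (equivalently, the index of the normalizer of ⟨x⟩ in G is at most m for all x ∈ G). Let N be the intersection of the normalizers of all cyclic subgroups of G. Then N is nilpotent of class at most 2. -/
open scoped commutatorElement

theorem stmt_16 (G : Type*) [Group G] [Finite G] (m : ℕ)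
    (hm : ∀ x : G, x ≠ 1 → (Subgroup.normalizer (Subgroup.zpowers x : Set G)).index ≤ m)
    (N : Subgroup G) (hN : N = ⨅ x : G, Subgroup.normalizer (Subgroup.zpowers x : Set G)) :
    ∀ a ∈ N, ∀ b ∈ N, ∀ c ∈ N, ⁅⁅a, b⁆, c⁆ = 1 := by
  subst hN
  have key : ∀ a ∈ ⨅ x : G, Subgroup.normalizer (Subgroup.zpowers x : Set G),
      ∀ x : G, a * x * a⁻¹ ∈ Subgroup.zpowers x := by
    intro a ha x
    have h := Subgroup.mem_iInf.mp ha x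
    exact (Subgroup.mem_normalizer_iff.mp h x).mp (Subgroup.mem_zpowers x)
  have comm : ∀ a b : G, (∀ x : G, a * x * a⁻¹ ∈ Subgroup.zpowers x) →
      (∀ x : G, b * x * b⁻¹ ∈ Subgroup.zpowers x) →
      ∀ x : G, (b*a)⁻¹ * (a*b) * x = x * ((b*a)⁻¹ * (a*b)) := by
    intro a b ha hb x
    obtain ⟨i, hi⟩ := Subgroup.mem_zpowers_iff.mp (ha x)
    obtain ⟨j, hj⟩ := Subgroup.mem_zpowers_iff.mp (hb x)
    have h1 : a*b*x*(a*b)⁻¹ = x ^ (i*j) := by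
      calc a*b*x*(a*b)⁻¹ = a*(b*x*b⁻¹)*a⁻¹ := by group
        _ = a*x^j*a⁻¹ := by rw [← hj]
        _ = (a*x*a⁻¹)^j := conj_zpow.symm
        _ = (x^i)^j := by rw [← hi]
        _ = x^(i*j) := by rw [← zpow_mul]
    have h2 : b*a*x*(b*a)⁻¹ = x ^ (i*j) := by
      calc b*a*x*(b*a)⁻¹ = b*(a*x*a⁻¹)*b⁻¹ := by group
        _ = b*x^i*b⁻¹ := by rw [← hi]
        _ = (b*x*b⁻¹)^i := conj_zpow.symm
        _ = (x^j)^i := by rw [← hj]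
        _ = x^(i*j) := by rw [← zpow_mul, Int.mul_comm]
    have h3 : a*b*x*(a*b)⁻¹ = b*a*x*(b*a)⁻¹ := by rw [h1, h2]
    have h4 : (a*b)*x = b*a*x*(b*a)⁻¹*(a*b) := by
      rw [← h3]; group
    calc (b*a)⁻¹ * (a*b) * x = (b*a)⁻¹ * ((a*b)*x) := by group
      _ = (b*a)⁻¹ * (b*a*x*(b*a)⁻¹*(a*b)) := by rw [h4]
      _ = x * ((b*a)⁻¹ * (a*b)) := by group
  intro a ha b hb c hc
  have h := comm a⁻¹ b⁻¹ (key _ (inv_mem ha)) (key _ (inv_mem hb)) c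
  have e : (b⁻¹*a⁻¹)⁻¹ * (a⁻¹*b⁻¹) = ⁅a, b⁆ := by
    rw [commutatorElement_def]; group
  rw [e] at h
  exact commutatorElement_eq_one_iff_commute.mpr h
end

section
/- Let G be a finite group and suppose subgroups K ≤ H ≤ G satisfy: K is normal in G, K is abelian, H = ⟨x₁,...,x_m⟩ for elements x_i, K has index t in H, and for each i the subgroup K⟨x_i⟩ is nilpotent of class at most 2. Then K^t ≤ Z(H), where K^t = {k^t : k ∈ K}. -/
open scoped commutatorElement

private lemma aux_pow_left {G : Type*} [Group G] (a b : G)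
    (hca : Commute ⁅a, b⁆ a) : ∀ n : ℕ, a ^ n * b = ⁅a, b⁆ ^ n * b * a ^ n := by
  have hab : a * b = ⁅a, b⁆ * b * a := by rw [commutatorElement_def]; group
  intro n
  induction n with
  | zero => simp
  | succ n ih =>
    calc a ^ (n + 1) * b = a * (a ^ n * b) := by rw [pow_succ']; group
      _ = a * (⁅a, b⁆ ^ n * b * a ^ n) := by rw [ih]
      _ = (a * ⁅a, b⁆ ^ n) * b * a ^ n := by group
      _ = (⁅a, b⁆ ^ n * a) * b * a ^ n := by rw [(hca.pow_left n).eq]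
      _ = ⁅a, b⁆ ^ n * (a * b) * a ^ n := by group
      _ = ⁅a, b⁆ ^ n * (⁅a, b⁆ * b * a) * a ^ n := by rw [hab]
      _ = ⁅a, b⁆ ^ (n + 1) * b * a ^ (n + 1) := by rw [pow_succ, pow_succ]; group

private lemma aux_pow_right {G : Type*} [Group G] (a b : G)
    (hcb : Commute ⁅a, b⁆ b) : ∀ n : ℕ, a * b ^ n = ⁅a, b⁆ ^ n * b ^ n * a := by
  have hab : a * b = ⁅a, b⁆ * b * a := by rw [commutatorElement_def]; group
  intro n
  induction n with
  | zero => simp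
  | succ n ih =>
    calc a * b ^ (n + 1) = (a * b) * b ^ n := by rw [pow_succ']; group
      _ = ⁅a, b⁆ * b * a * b ^ n := by rw [hab]
      _ = ⁅a, b⁆ * b * (a * b ^ n) := by group
      _ = ⁅a, b⁆ * b * (⁅a, b⁆ ^ n * b ^ n * a) := by rw [ih]
      _ = ⁅a, b⁆ * (b * ⁅a, b⁆ ^ n) * b ^ n * a := by group
      _ = ⁅a, b⁆ * (⁅a, b⁆ ^ n * b) * b ^ n * a := by rw [(hcb.pow_left n).eq]
      _ = (⁅a, b⁆ * ⁅a, b⁆ ^ n) * (b * b ^ n) * a := by group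
      _ = ⁅a, b⁆ ^ (n + 1) * b ^ (n + 1) * a := by rw [← pow_succ', ← pow_succ']

theorem stmt_17 (G : Type*) [Group G] [Finite G] (K H : Subgroup G)
    (hKH : K ≤ H) (hKnorm : K.Normal) (hKab : ∀ a ∈ K, ∀ b ∈ K, a * b = b * a)
    (m : ℕ) (x : Fin m → G) (hgen : H = Subgroup.closure (Set.range x))
    (t : ℕ) (ht : (K.subgroupOf H).index = t)
    (hnil : ∀ i, ∀ a ∈ K ⊔ Subgroup.zpowers (x i), ∀ b ∈ K ⊔ Subgroup.zpowers (x i),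
      ∀ c ∈ K ⊔ Subgroup.zpowers (x i), ⁅⁅a, b⁆, c⁆ = 1) :
    ∀ k ∈ K, ∀ h ∈ H, k ^ t * h = h * k ^ t := by
  intro k hk h hh
  -- k^t commutes with each generator x i
  have key : ∀ i, k ^ t * x i = x i * k ^ t := by
    intro i
    set N := K ⊔ Subgroup.zpowers (x i) with hN
    have hkN : k ∈ N := Subgroup.mem_sup_left hk
    have hxN : x i ∈ N := Subgroup.mem_sup_right (Subgroup.mem_zpowers _)
    have hca : Commute ⁅k, x i⁆ k := by
      have := hnil i k hkN (x i) hxN k hkN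
      exact (commutatorElement_eq_one_iff_commute.mp this)
    have hcb : Commute ⁅k, x i⁆ (x i) := by
      have := hnil i k hkN (x i) hxN (x i) hxN
      exact (commutatorElement_eq_one_iff_commute.mp this)
    -- x i ^ t ∈ K
    have hxH : x i ∈ H := by
      rw [hgen]; exact Subgroup.subset_closure ⟨i, rfl⟩
    have hxt : (x i) ^ t ∈ K := by
      have h1 : ((⟨x i, hxH⟩ : H) : H ⧸ K.subgroupOf H) ^ t = 1 := by
        rw [← ht, Subgroup.index]
        exact pow_card_eq_one'
      rw [← QuotientGroup.mk_pow, QuotientGroup.eq_one_iff] at h1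
      simpa [Subgroup.mem_subgroupOf] using h1
    -- hence ⁅k, x i⁆ ^ t = 1
    have hkxt : k * (x i) ^ t = (x i) ^ t * k := hKab k hk _ hxt
    have h2 := aux_pow_right k (x i) hcb t
    have hct : ⁅k, x i⁆ ^ t = 1 := by
      have h4 : ⁅k, x i⁆ ^ t * ((x i) ^ t * k) = 1 * ((x i) ^ t * k) := by
        rw [one_mul, ← mul_assoc, ← h2, hkxt]
      exact mul_right_cancel h4
    have h3 := aux_pow_left k (x i) hca t
    rw [hct, one_mul] at h3
    exact h3
  -- extend to all of H
  rw [hgen] at hh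
  induction hh using Subgroup.closure_induction with
  | mem g hg => obtain ⟨i, rfl⟩ := hg; exact key i
  | one => simp
  | mul a b _ _ ha hb => rw [← mul_assoc, ha, mul_assoc, hb, mul_assoc]
  | inv a _ ha =>
      have := ha
      calc k ^ t * a⁻¹ = a⁻¹ * (a * k ^ t * a⁻¹) := by group
        _ = a⁻¹ * (k ^ t * a * a⁻¹) := by rw [← this]
        _ = a⁻¹ * k ^ t := by group
end
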